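/- arXiv:2510.13523 — 6 statements merged into one kernel-verified Lean document; each statement's English description precedes it below -/
import Mathlib

section
/- Let n ≥ 1 and let d ∈ P^ms_C(2n) = P_{1,1}(2n). Then f_CD(d) := d_D, the D-collapse of d, belongs to P^sp_D(2n) = P_{0,0}(2n). -/
/-- A partition of `N`: a non-increasing list of positive naturals summing to `N`. -/
def IsPartition (N : ℕ) (l : List ℕ) : Prop :=
  l.Pairwise (· ≥ ·) ∧ (∀ p ∈ l, 0 < p) ∧ l.sum = N

/-- Dominance order on partitions: `Dom p q` means `p ⪯ q`,
i.e. every initial partial sum of `p` is at most that of `q`. -/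
def Dom (p q : List ℕ) : Prop :=
  ∀ j : ℕ, (p.take j).sum ≤ (q.take j).sum

/-- The height `h_d(s) = #{j : d_j ≥ s}`. -/
def height (l : List ℕ) (s : ℕ) : ℕ :=
  (l.filter (fun p => decide (s ≤ p))).length

/-- Membership in `P_ε(N)`: every part congruent to `ε` mod 2 occurs with even multiplicity. -/
def PEps (e : ℕ) (l : List ℕ) : Prop :=
  ∀ s ∈ l, s % 2 = e % 2 → Even (l.count s)

/-- Membership in `P_{ε,ε'}(N)`: lies in `P_ε` and `h_d(s) ≡ ε'  (mod 2)` for every integer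
`s ≥ 0` with `s ≡ ε (mod 2)` which is either `0` or a part of `d`. -/
def PEpsEps (e e' : ℕ) (l : List ℕ) : Prop :=
  PEps e l ∧
    ∀ s : ℕ, s % 2 = e % 2 → (s = 0 ∨ s ∈ l) → height l s % 2 = e' % 2

/-- `d⁺ = [d₁ + 1, d₂, …, d_k]`. -/
def dplus : List ℕ → List ℕ
  | [] => []
  | a :: rest => (a + 1) :: rest

/-- `d⁻ = [d₁, …, d_{k−1}, d_k − 1]`, the last entry removed if `d_k = 1`. -/
def dminus (l : List ℕ) : List ℕ :=
  (l.dropLast ++ [l.getLastD 0 - 1]).filter (fun p => decide (0 < p))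

/-- `IsCollapse e N l c` says that `c` is the collapse of `l` into `P_e`: the greatest
element, in the dominance order, of the set of partitions of `N` lying in `P_e` and
dominated by `l`. -/
def IsCollapse (e N : ℕ) (l c : List ℕ) : Prop :=
  IsPartition N c ∧ PEps e c ∧ Dom c l ∧
    ∀ m : List ℕ, IsPartition N m → PEps e m → Dom m l → Dom m c

lemma even_length_of_even_counts (l : List ℕ) (h : ∀ v ∈ l, Even (l.count v)) :
    Even l.length := by
  classical
  have : l.length = Multiset.card (l : Multiset ℕ) := by simp
  rw [this, ← Multiset.toFinset_sum_count_eq]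
  apply Finset.even_sum
  intro v hv
  have hv' : v ∈ l := by simpa using hv
  simpa [List.count] using h v hv'

lemma even_countP_of_even_counts (l : List ℕ) (p : ℕ → Bool)
    (h : ∀ v ∈ l, p v → Even (l.count v)) : Even (l.countP p) := by
  rw [List.countP_eq_length_filter]
  apply even_length_of_even_counts
  intro v hv
  have hp : p v = true := List.of_mem_filter hv
  have hvl : v ∈ l := List.mem_of_mem_filter hv
  rw [List.count_filter hp]
  exact h v hvl hp

lemma sum_mod_two (l : List ℕ) :
    l.sum % 2 = l.countP (fun v => decide (v % 2 = 1)) % 2 := by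
  induction l with
  | nil => simp
  | cons x t ih =>
    rw [List.sum_cons, List.countP_cons]
    rcases Nat.mod_two_eq_zero_or_one x with hx | hx <;> simp [hx] <;> omega

/-- If every odd value of `l` has even multiplicity, then `l.sum` is even. -/
lemma sum_even_of_odd_counts (l : List ℕ)
    (h : ∀ v ∈ l, v % 2 = 1 → Even (l.count v)) : l.sum % 2 = 0 := by
  rw [sum_mod_two]
  have : Even (l.countP (fun v => decide (v % 2 = 1))) := by
    apply even_countP_of_even_counts
    intro v hv hp
    exact h v hv (by simpa using hp)
  rw [Nat.even_iff] at this
  omega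

lemma dropWhile_lt (t : ℕ) : ∀ (l : List ℕ), l.Pairwise (· ≥ ·) →
    ∀ x ∈ l.dropWhile (fun p => decide (t ≤ p)), x < t := by
  intro l
  induction l with
  | nil => simp
  | cons a tl ih =>
    intro hs x hx
    rw [List.pairwise_cons] at hs
    by_cases hat : t ≤ a
    · rw [List.dropWhile_cons_of_pos (by simpa using hat)] at hx
      exact ih hs.2 x hx
    · rw [List.dropWhile_cons_of_neg (by simpa using hat)] at hx
      rcases List.mem_cons.mp hx with rfl | hx
      · omega
      · have := hs.1 x hx; omega

lemma sum_take_append (l₁ l₂ : List ℕ) (j : ℕ) :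
    ((l₁ ++ l₂).take j).sum = (l₁.take j).sum + (l₂.take (j - l₁.length)).sum := by
  rw [List.take_append, List.sum_append]

lemma sum_take_cons (x : ℕ) (l : List ℕ) (j : ℕ) :
    ((x :: l).take j).sum = (if j = 0 then 0 else x + (l.take (j-1)).sum) := by
  cases j <;> simp

lemma sum_take_replicate (m s j : ℕ) :
    ((List.replicate m s).take j).sum = min j m * s := by
  rw [List.take_replicate, List.sum_replicate, smul_eq_mul]

/-- If `d ∈ P^ms_C(2n) = P_{1,1}(2n)` then `f_CD(d) = d_D`, the D-collapse of `d`, lies in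
`P^sp_D(2n) = P_{0,0}(2n)`. -/
theorem fCD_mem (n : ℕ) (hn : 1 ≤ n) (d : List ℕ)
    (hd : IsPartition (2 * n) d) (hdC : PEpsEps 1 1 d)
    (e : List ℕ) (he : IsCollapse 0 (2 * n) d e) :
    PEpsEps 0 0 e := by
  obtain ⟨⟨hesort, hepos, hesum⟩, heP0, heDom, hemax⟩ := he
  obtain ⟨hdsort, hdpos, hdsum⟩ := hd
  have hdP1 : PEps 1 d := hdC.1
  refine ⟨heP0, ?_⟩
  intro s hs hor
  simp only [Nat.zero_mod] at hs ⊢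
  rcases hor with rfl | hse
  · -- s = 0 : height e 0 = e.length, which is even
    have hfull : e.filter (fun p => decide (0 ≤ p)) = e :=
      List.filter_eq_self.mpr (by intro a _; simp)
    have hlen : height e 0 = e.length := by rw [height, hfull]
    rw [hlen]
    have hodds : e.countP (fun v => decide (v % 2 = 1)) % 2 = 0 := by
      have := sum_mod_two e
      rw [hesum] at this
      omega
    have hevens : Even (e.countP (fun v => decide (¬ (v % 2 = 1)))) := by
      apply even_countP_of_even_counts
      intro v hv hp
      exact heP0 v hv (by simp at hp; omega)
    have hsplit := List.length_eq_countP_add_countP (fun v => decide (v % 2 = 1)) (l := e)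
    rw [Nat.even_iff] at hevens
    simp only [decide_eq_true_eq] at hsplit hevens
    omega
  · -- s ∈ e, s even; suppose the height is odd and derive a contradiction
    by_contra hoddc
    have hodd : height e s % 2 = 1 := by omega
    have hs2 : 2 ≤ s := by have := hepos s hse; omega
    -- decompose e = A ++ C ++ B
    set A := e.takeWhile (fun p => decide (s+1 ≤ p)) with hAdef
    set R := e.dropWhile (fun p => decide (s+1 ≤ p)) with hRdef
    have hAR : A ++ R = e := List.takeWhile_append_dropWhile
    have hA : ∀ x ∈ A, s + 1 ≤ x := by
      intro x hx; simpa using List.mem_takeWhile_imp hx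
    have hRsub : R.Sublist e := List.dropWhile_sublist _
    have hRsort : R.Pairwise (· ≥ ·) := List.Pairwise.sublist hRsub hesort
    have hRlt : ∀ x ∈ R, x ≤ s := by
      intro x hx
      have := dropWhile_lt (s+1) e hesort x hx
      omega
    set C := R.takeWhile (fun p => decide (s ≤ p)) with hCdef
    set B := R.dropWhile (fun p => decide (s ≤ p)) with hBdef
    have hCB : C ++ B = R := List.takeWhile_append_dropWhile
    have hCsub : C.Sublist R := List.takeWhile_sublist _
    have hBsub : B.Sublist R := List.dropWhile_sublist _
    have hC : ∀ x ∈ C, x = s := by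
      intro x hx
      have h1 : s ≤ x := by simpa using List.mem_takeWhile_imp hx
      have h2 : x ≤ s := hRlt x (hCsub.mem hx)
      omega
    have hB : ∀ x ∈ B, x < s := fun x hx => dropWhile_lt s R hRsort x hx
    set m := C.length with hmdef
    have hCrep : C = List.replicate m s := List.eq_replicate_iff.mpr ⟨rfl, hC⟩
    have he2 : e = A ++ (C ++ B) := by rw [hCB, hAR]
    set a := A.length with hadef
    -- s lies in C, count s e = m, m even, m ≥ 2
    have hsC : s ∈ C := by
      have : s ∈ A ++ (C ++ B) := he2 ▸ hse
      rcases List.mem_append.mp this with h | h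
      · have := hA s h; omega
      · rcases List.mem_append.mp h with h | h
        · exact h
        · have := hB s h; omega
    have hsnA : s ∉ A := fun h => by have := hA s h; omega
    have hsnB : s ∉ B := fun h => by have := hB s h; omega
    have hcount : e.count s = m := by
      rw [he2, List.count_append, List.count_append,
        List.count_eq_zero.mpr hsnA, List.count_eq_zero.mpr hsnB, hCrep,
        List.count_replicate]
      simp
    have hmeven : Even m := by
      have := heP0 s hse (by omega)
      rwa [hcount] at this
    have hm1 : 1 ≤ m := by
      rw [hmdef]
      exact List.length_pos_iff.mpr (fun h => by rw [h] at hsC; simp at hsC)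
    obtain ⟨k, hmk⟩ : ∃ k, m = k + 2 := by
      rw [Nat.even_iff] at hmeven; exact ⟨m - 2, by omega⟩
    have hkeven : Even k := by rw [Nat.even_iff] at hmeven ⊢; omega
    -- height e s = a + m
    have hh : height e s = a + m := by
      rw [height, he2, List.filter_append, List.filter_append]
      rw [List.filter_eq_self.mpr (fun x hx => by
        simp only [decide_eq_true_eq]; have := hA x hx; omega)]
      rw [List.filter_eq_self.mpr (fun x hx => by
        simp only [decide_eq_true_eq]; have := hC x hx; omega)]
      rw [List.filter_eq_nil_iff.mpr (fun x hx => by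
        simp only [decide_eq_true_eq]; have := hB x hx; omega)]
      simp [hmdef, hadef]
    -- convenient form of the decomposition
    have he3 : e = A ++ (List.replicate m s ++ B) := by rw [← hCrep, hCB, hAR]
    have hElen : e.length = a + (m + B.length) := by rw [he3]; simp [hadef]
    -- partial sums of e in the middle range
    have hFemid : ∀ j, a ≤ j → j ≤ a + m → (e.take j).sum = A.sum + (j - a) * s := by
      intro j h1 h2
      rw [he3, sum_take_append, sum_take_append, sum_take_replicate,
        List.length_replicate,
        List.take_of_length_le (show A.length ≤ j by omega),
        show j - A.length - m = 0 from by omega,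
        show min (j - A.length) m = j - a from by omega]
      simp
    -- parity : A.sum is odd
    have hAodd : A.sum % 2 = 1 := by
      have h₁ := sum_mod_two A
      have h₂ : Even (A.countP (fun v => decide (¬ (v % 2 = 1)))) := by
        apply even_countP_of_even_counts
        intro v hv hp
        have hvA := hA v hv
        have hveven : v % 2 = 0 := by simp at hp; omega
        have hvne : v ∉ B := fun hm => by have := hB v hm; omega
        have hc : A.count v = e.count v := by
          rw [he3, List.count_append, List.count_append, List.count_replicate,
            List.count_eq_zero.mpr hvne,
            if_neg (show ¬ ((s == v) = true) by simp; omega)]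
          omega
        rw [hc]
        exact heP0 v (by rw [← hAR]; exact List.mem_append_left _ hv) hveven
      have h₃ := List.length_eq_countP_add_countP (fun v => decide (v % 2 = 1)) (l := A)
      have haodd : a % 2 = 1 := by
        rw [Nat.even_iff] at hmeven
        rw [hh] at hodd
        omega
      rw [Nat.even_iff] at h₂
      simp only [decide_eq_true_eq] at h₂ h₃
      rw [← hadef] at h₃
      omega
    -- elements of e in the middle block equal s
    have hegett : ∀ i (hi : i < e.length), a ≤ i → i < a + m → e[i] = s := by
      intro i hi hia him
      rw [List.getElem_of_eq he3 hi,
        List.getElem_append_right (show A.length ≤ i by omega),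
        List.getElem_append_left
          (show i - A.length < (List.replicate m s).length by
            simp [List.length_replicate]; omega)]
      exact List.getElem_replicate _
    have hdsorted := List.pairwise_iff_getElem.mp hdsort
    -- the key strictness lemma
    have hstrict : ∀ j, a < j → j < a + m → (e.take j).sum < (d.take j).sum := by
      intro j h1 h2
      rcases Nat.lt_or_ge (e.take j).sum (d.take j).sum with h | h
      · exact h
      have heq : (e.take j).sum = (d.take j).sum := le_antisymm (heDom j) h
      exfalso
      obtain ⟨t, rfl⟩ : ∃ t, j = t + 1 := ⟨j - 1, by omega⟩
      have hjlen : t + 1 < e.length := by omega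
      have hjlen' : t < e.length := by omega
      have hej : e[t+1]'hjlen = s := hegett _ hjlen (by omega) (by omega)
      have het : e[t]'hjlen' = s := hegett _ hjlen' (by omega) (by omega)
      -- (e.take (t+1)).sum < 2n
      have hlt2n : (e.take (t+1)).sum < 2 * n := by
        have h9 : (e.take (t+1)).sum + (e.drop (t+1)).sum = 2 * n := by
          rw [List.sum_take_add_sum_drop, hesum]
        have hdropc := List.drop_eq_getElem_cons hjlen
        rw [hdropc, List.sum_cons, hej] at h9
        omega
      have hdlen : t + 1 < d.length := by
        by_contra hcon
        have heq' := heq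
        rw [List.take_of_length_le (show d.length ≤ t + 1 by omega), hdsum] at heq'
        omega
      have hdlen' : t < d.length := by omega
      -- d[t+1] ≥ s
      have hd1 : s ≤ d[t+1]'hdlen := by
        have h₁ := heDom (t+1+1)
        rw [List.sum_take_succ e (t+1) hjlen, List.sum_take_succ d (t+1) hdlen, hej] at h₁
        omega
      -- d[t] ≤ s
      have hd0 : d[t]'hdlen' ≤ s := by
        have h₁ := heDom t
        have h₂ := List.sum_take_succ e t hjlen'
        have h₃ := List.sum_take_succ d t hdlen'
        rw [het] at h₂
        omega
      have hdt : d[t]'hdlen' = s := by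
        have h8 := hdsorted t (t+1) hdlen' hdlen (by omega)
        omega
      -- the sum of the first t+1 parts of d is even
      have hTeven : (d.take (t+1)).sum % 2 = 0 := by
        apply sum_even_of_odd_counts
        intro v hv hvodd
        obtain ⟨i, hi, hvi⟩ := List.mem_iff_getElem.mp hv
        have hit : i < t + 1 := by
          have := hi
          simp [List.length_take] at this
          omega
        have hid : i < d.length := by omega
        have hvd : v = d[i]'hid := by
          rw [← hvi]
          exact List.getElem_take
        have hvgt : s < v := by
          rcases Nat.lt_or_ge i t with hlt | hge
          · have h8 := hdsorted i t hid hdlen' hlt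
            omega
          · have hieq : i = t := by omega
            subst hieq
            have hv_s : v = s := by rw [hvd]; exact hdt
            omega
        -- the count of v among the first t+1 parts is its full count in d
        have hcnt : (d.take (t+1)).count v = d.count v := by
          have hsplit : d.take (t+1) ++ d.drop (t+1) = d := List.take_append_drop _ _
          have hzero : (d.drop (t+1)).count v = 0 := by
            rw [List.count_eq_zero]
            intro hmem
            obtain ⟨i', hi', hvi'⟩ := List.mem_iff_getElem.mp hmem
            have hi'' : t + 1 + i' < d.length := by
              have := hi'
              simp [List.length_drop] at this
              omega
            have h7 : v = d[t+1+i']'hi'' := by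
              rw [← hvi']
              exact List.getElem_drop
            have h8 := hdsorted t (t+1+i') hdlen' hi'' (by omega)
            omega
          calc (d.take (t+1)).count v
              = (d.take (t+1)).count v + (d.drop (t+1)).count v := by omega
            _ = d.count v := by rw [← List.count_append, hsplit]
        have hvd' : v ∈ d := List.Sublist.mem hv (List.take_sublist _ _)
        rw [hcnt]
        exact hdP1 v hvd' (by omega)
      -- but the sum of the first t+1 parts of e is odd
      have hσe : (e.take (t+1)).sum % 2 = 1 := by
        rw [hFemid (t+1) (by omega) (by omega)]
        have hms : (t + 1 - a) * s % 2 = 0 := by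
          rw [Nat.mul_mod, hs]
          simp
        omega
      omega
    -- the improved candidate partition
    set E' := A ++ ((s+1) :: (List.replicate k s ++ ((s-1) :: B))) with hE'def
    have hFmid' : ∀ j, a < j → j < a + m →
        (E'.take j).sum = A.sum + (s + 1) + (j - a - 1) * s := by
      intro j h1 h2
      rw [hE'def, sum_take_append,
        List.take_of_length_le (show A.length ≤ j by omega),
        sum_take_cons, if_neg (show ¬ (j - A.length = 0) by omega),
        sum_take_append, sum_take_replicate, List.length_replicate,
        sum_take_cons, if_pos (show j - A.length - 1 - k = 0 by omega),
        show min (j - A.length - 1) k = j - a - 1 from by omega]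
      ring
    have hrel1 : ∀ j, j ≤ a → (E'.take j).sum = (e.take j).sum := by
      intro j hj
      rw [hE'def, he3, sum_take_append, sum_take_append,
        show j - A.length = 0 from by omega]
      simp
    have hrel2 : ∀ j, a < j → j < a + m → (E'.take j).sum = (e.take j).sum + 1 := by
      intro j h1 h2
      rw [hFemid j (by omega) (by omega), hFmid' j h1 h2]
      obtain ⟨w, hw⟩ : ∃ w, j - a = w + 1 := ⟨j - a - 1, by omega⟩
      rw [hw]
      simp only [Nat.add_sub_cancel]
      ring
    have hrel3 : ∀ j, a + m ≤ j → (E'.take j).sum = (e.take j).sum := by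
      intro j hj
      rw [hE'def, he3]
      simp only [sum_take_append, sum_take_cons, sum_take_replicate, List.length_replicate]
      rw [if_neg (show ¬ (j - A.length = 0) by omega),
        if_neg (show ¬ (j - A.length - 1 - k = 0) by omega),
        show min (j - A.length - 1) k = k from by omega,
        show min (j - A.length) m = m from by omega,
        List.take_of_length_le (show A.length ≤ j by omega),
        show j - A.length - 1 - k - 1 = j - A.length - m from by omega,
        hmk,
        show (k + 2) * s = k * s + s + s from by ring]
      generalize k * s = K
      omega
    -- E' is sorted
    have hAsort : A.Pairwise (· ≥ ·) := by
      rw [hAdef]; exact List.Pairwise.sublist (List.takeWhile_sublist _) hesort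
    have hBsort : B.Pairwise (· ≥ ·) := List.Pairwise.sublist (hBsub.trans hRsub) hesort
    have hE'sort : List.Pairwise (· ≥ ·) E' := by
      rw [hE'def]
      refine List.pairwise_append.mpr ⟨hAsort, ?_, ?_⟩
      · refine List.pairwise_cons.mpr ⟨?_, ?_⟩
        · intro y hy
          rcases List.mem_append.mp hy with hy | hy
          · have := List.eq_of_mem_replicate hy; omega
          · rcases List.mem_cons.mp hy with rfl | hy
            · omega
            · have := hB y hy; omega
        · refine List.pairwise_append.mpr ⟨?_, ?_, ?_⟩
          · exact List.pairwise_replicate.mpr (Or.inr le_rfl)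
          · exact List.pairwise_cons.mpr ⟨fun y hy => by have := hB y hy; omega, hBsort⟩
          · intro x hx y hy
            have hxs := List.eq_of_mem_replicate hx
            rcases List.mem_cons.mp hy with rfl | hy
            · omega
            · have := hB y hy; omega
      · intro x hx y hy
        have hxA := hA x hx
        rcases List.mem_cons.mp hy with rfl | hy
        · omega
        · rcases List.mem_append.mp hy with hy | hy
          · have := List.eq_of_mem_replicate hy; omega
          · rcases List.mem_cons.mp hy with rfl | hy
            · omega
            · have := hB y hy; omega
    -- E' has positive parts
    have hE'pos : ∀ p ∈ E', 0 < p := by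
      intro p hp
      rw [hE'def] at hp
      rcases List.mem_append.mp hp with hp | hp
      · exact hepos p (by rw [← hAR]; exact List.mem_append_left _ hp)
      rcases List.mem_cons.mp hp with rfl | hp
      · omega
      rcases List.mem_append.mp hp with hp | hp
      · have := List.eq_of_mem_replicate hp; omega
      rcases List.mem_cons.mp hp with rfl | hp
      · omega
      · exact hepos p (List.Sublist.mem hp ((hBsub.trans hRsub)))
    -- E' sums to 2n
    have hE'sum : E'.sum = 2 * n := by
      have h₁ : E'.sum = A.sum + ((s+1) + (k * s + ((s-1) + B.sum))) := by
        rw [hE'def]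
        simp [List.sum_append, List.sum_replicate, smul_eq_mul]
      have h₂ : A.sum + (m * s + B.sum) = 2 * n := by
        rw [← hesum, he3]
        simp [List.sum_append, List.sum_replicate, smul_eq_mul]
      rw [hmk, show (k + 2) * s = k * s + s + s from by ring] at h₂
      rw [h₁]
      generalize k * s = K at h₂ ⊢
      omega
    -- E' lies in P₀
    have hE'P0 : PEps 0 E' := by
      intro v hv hv2
      simp only [Nat.zero_mod] at hv2
      have hvs1 : v ≠ s + 1 := fun h => by omega
      have hvs2 : v ≠ s - 1 := fun h => by omega
      rcases eq_or_ne v s with rfl | hvs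
      · have hcnt : E'.count v = k := by
          rw [hE'def, List.count_append, List.count_cons, List.count_append,
            List.count_replicate, List.count_cons,
            List.count_eq_zero.mpr hsnA, List.count_eq_zero.mpr hsnB,
            if_neg (show ¬ (((v+1) == v) = true) by simp),
            if_pos (show ((v == v) = true) by simp),
            if_neg (show ¬ (((v-1) == v) = true) by simp; omega)]
          omega
        rw [hcnt]
        exact hkeven
      · have hcnt : E'.count v = e.count v := by
          rw [hE'def, he3]
          simp only [List.count_append, List.count_cons, List.count_replicate, beq_iff_eq,
            if_neg (show ¬ s = v from fun h => hvs h.symm),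
            if_neg (show ¬ s + 1 = v from fun h => hvs1 h.symm),
            if_neg (show ¬ s - 1 = v from fun h => hvs2 h.symm)]
          omega
        have hve : v ∈ e := by
          rw [hE'def] at hv
          rcases List.mem_append.mp hv with h | h
          · rw [← hAR]; exact List.mem_append_left _ h
          rcases List.mem_cons.mp h with h | h
          · exact absurd h hvs1
          rcases List.mem_append.mp h with h | h
          · exact absurd (List.eq_of_mem_replicate h) hvs
          rcases List.mem_cons.mp h with h | h
          · exact absurd h hvs2
          · rw [← hAR]
            refine List.mem_append_right _ ?_
            rw [← hCB]
            exact List.mem_append_right _ h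
        rw [hcnt]
        exact heP0 v hve hv2
    -- E' is dominated by d
    have hE'dom : Dom E' d := by
      intro j
      rcases le_or_gt j a with hj | hj
      · rw [hrel1 j hj]; exact heDom j
      rcases Nat.lt_or_ge j (a + m) with hj2 | hj2
      · rw [hrel2 j hj hj2]
        have := hstrict j hj hj2
        omega
      · rw [hrel3 j hj2]; exact heDom j
    -- contradiction with maximality of e
    have hfinal := hemax E' ⟨hE'sort, hE'pos, hE'sum⟩ hE'P0 hE'dom (a+1)
    rw [hrel2 (a+1) (by omega) (by omega)] at hfinal
    omega
end

section
/- The map f_DC : P^sp_D(2n) → P^ms_C(2n), d ↦ ((d⁺)⁻)_C, is order-preserving: if d, d' ∈ P^sp_D(2n) satisfy d ⪯ d' in the dominance order, then f_DC(d) ⪯ f_DC(d'). -/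
lemma take_sum_le (l : List ℕ) (j : ℕ) : (l.take j).sum ≤ l.sum := by
  conv_rhs => rw [← List.take_append_drop j l]
  rw [List.sum_append]
  exact Nat.le_add_right _ _

lemma append_take_sum (m s : List ℕ) (j : ℕ) :
    ((m ++ s).take j).sum = (m.take j).sum + (s.take (j - m.length)).sum := by
  rw [List.take_append, List.sum_append]

lemma dminus_take_sum (l : List ℕ) (hl : l ≠ []) (hpos : ∀ p ∈ l, 0 < p) (j : ℕ) :
    ((dminus l).take j).sum = min ((l.take j).sum) (l.sum - 1) := by
  obtain ⟨m, b, rfl⟩ : ∃ m b, l = m ++ [b] :=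
    ⟨l.dropLast, l.getLast hl, (List.dropLast_append_getLast hl).symm⟩
  have hb : 0 < b := hpos b (by simp)
  have hm : ∀ p ∈ m, 0 < p := fun p hp => hpos p (by simp [hp])
  have hdm : dminus (m ++ [b]) = m ++ ([b - 1].filter (fun p => decide (0 < p))) := by
    unfold dminus
    rw [List.dropLast_concat, List.getLastD_concat, List.filter_append]
    congr 1
    exact List.filter_eq_self.mpr (fun p hp => by simpa using hm p hp)
  rw [hdm, append_take_sum, append_take_sum]
  rcases le_or_gt j m.length with h | h
  · have h0 : j - m.length = 0 := by omega
    rw [h0]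
    simp only [List.take_zero, List.sum_nil, add_zero]
    have h1 : (m.take j).sum ≤ m.sum := take_sum_le m j
    have h2 : (m ++ [b]).sum = m.sum + b := by simp
    omega
  · have hjm : m.length ≤ j := le_of_lt h
    rw [List.take_of_length_le hjm]
    have h0 : 1 ≤ j - m.length := by omega
    have h1 : ([b].take (j - m.length)).sum = b := by
      rw [List.take_of_length_le (by simpa using h0)]; simp
    have h2 : (([b - 1].filter (fun p => decide (0 < p))).take (j - m.length)).sum = b - 1 := by
      rcases Nat.eq_or_lt_of_le hb with hb1 | hb1
      · simp [← hb1]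
      · have hf : [b - 1].filter (fun p => decide (0 < p)) = [b - 1] :=
          List.filter_eq_self.mpr (by intro p hp; simp at hp ⊢; omega)
        rw [hf, List.take_of_length_le (by simpa using h0)]; simp
    have h3 : (m ++ [b]).sum = m.sum + b := by simp
    omega

lemma dplus_take_sum (a : ℕ) (t : List ℕ) (j : ℕ) :
    ((dplus (a :: t)).take j).sum = ((a :: t).take j).sum + min j 1 := by
  cases j with
  | zero => simp
  | succ j' => simp [dplus, Nat.add_comm, Nat.add_assoc, Nat.add_left_comm]

lemma fDC_sum_formula (N : ℕ) (d : List ℕ) (hd : IsPartition N d) (hne : d ≠ []) (j : ℕ) :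
    ((dminus (dplus d)).take j).sum = min ((d.take j).sum + min j 1) N := by
  obtain ⟨a, t, rfl⟩ : ∃ a t, d = a :: t := ⟨d.head hne, d.tail, (List.cons_head_tail hne).symm⟩
  have hpos : ∀ p ∈ dplus (a :: t), 0 < p := by
    intro p hp
    simp only [dplus, List.mem_cons] at hp
    rcases hp with rfl | hp
    · omega
    · exact hd.2.1 p (by simp [hp])
  rw [dminus_take_sum _ (by simp [dplus]) hpos j, dplus_take_sum]
  have hsum : (dplus (a :: t)).sum = (a :: t).sum + 1 := by simp [dplus]; omega
  rw [hsum, hd.2.2]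
  omega

lemma key_dom (N : ℕ) (d d' : List ℕ) (hd : IsPartition N d) (hd' : IsPartition N d')
    (hdom : Dom d d') : Dom (dminus (dplus d)) (dminus (dplus d')) := by
  intro j
  rcases eq_or_ne d [] with rfl | hne
  · have : dminus (dplus ([] : List ℕ)) = [] := by decide
    simp [this]
  rcases eq_or_ne d' [] with rfl | hne'
  · exfalso
    obtain ⟨a, t, rfl⟩ : ∃ a t, d = a :: t := ⟨d.head hne, d.tail, (List.cons_head_tail hne).symm⟩
    have h1 : 0 < a := hd.2.1 a (by simp)
    have h2 : (a :: t).sum = N := hd.2.2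
    have h3 : ([] : List ℕ).sum = N := hd'.2.2
    have h4 : a ≤ (a :: t).sum := by simp [Nat.le_add_right]
    simp at h3
    omega
  rw [fDC_sum_formula N d hd hne j, fDC_sum_formula N d' hd' hne' j]
  have := hdom j
  omega

/-- The map `f_DC : P^sp_D(2n) → P^ms_C(2n)`, `d ↦ ((d⁺)⁻)_C`, is order-preserving for the
dominance order. -/
theorem fDC_monotone (n : ℕ) (d d' : List ℕ)
    (hd : IsPartition (2 * n) d) (hd' : IsPartition (2 * n) d')
    (hdD : PEpsEps 0 0 d) (hd'D : PEpsEps 0 0 d')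
    (hdom : Dom d d')
    (e e' : List ℕ)
    (he : IsCollapse 1 (2 * n) (dminus (dplus d)) e)
    (he' : IsCollapse 1 (2 * n) (dminus (dplus d')) e') :
    Dom e e' := by
  have h1 : Dom (dminus (dplus d)) (dminus (dplus d')) := key_dom (2 * n) d d' hd hd' hdom
  have h2 : Dom e (dminus (dplus d')) := fun j => le_trans (he.2.2.1 j) (h1 j)
  exact he'.2.2.2 e he.1 he.2.1 h2
end

section
/- Let d be a partition of 2n lying in P_1(2n) (every odd part of d occurs with even multiplicity). Then d ∈ P_{1,1}(2n), i.e. h_d(s) is odd for every odd part s of d, if and only if the transpose partition d^t lies in P_0(2n), i.e. every even part of d^t occurs with even multiplicity. -/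
/-- The transpose partition: its `i`-th part is `#{j : d_j ≥ i}`. -/
def transposeP (l : List ℕ) : List ℕ :=
  (List.range (l.headD 0)).map (fun i => height l (i + 1))

lemma height_count_aux (l : List ℕ) (s : ℕ) :
    height l s = l.count s + height l (s + 1) := by
  induction l with
  | nil => simp [height]
  | cons p t ih =>
    simp only [height, List.filter_cons, List.count_cons] at *
    split_ifs with h1 h2 <;> simp_all <;> omega

lemma height_antitone (l : List ℕ) {s t : ℕ} (h : s ≤ t) :
    height l t ≤ height l s := by
  induction l with
  | nil => simp [height]
  | cons p q ih =>
    simp only [height, List.filter_cons] at *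
    split_ifs with h1 h2 <;> simp_all <;> omega

lemma core_parity (f g : ℕ → ℕ)
    (G : ∀ v i, 1 ≤ v → (i < g v ↔ v ≤ f (i + 1)))
    (A : ∀ s, s % 2 = 1 → f (s + 1) < f s → f s % 2 = f (s + 1) % 2) :
    (∀ s, s % 2 = 1 → f (s + 1) < f s → f s % 2 = 1) ↔
      (∀ v, 1 ≤ v → v % 2 = 0 → g (v + 1) < g v → g v % 2 = g (v + 1) % 2) := by
  constructor
  · intro B v hv1 hv2 hlt
    have hb1 : 1 ≤ g v := by omega
    have hfb : f (g v) = v := by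
      have h1 : v ≤ f (g v - 1 + 1) := (G v (g v - 1) hv1).mp (by omega)
      have h2 : ¬ (v + 1 ≤ f (g v - 1 + 1)) := fun h =>
        absurd ((G (v + 1) (g v - 1) (by omega)).mpr h) (by omega)
      have e : g v - 1 + 1 = g v := by omega
      rw [e] at h1 h2; omega
    have hfb1 : f (g v + 1) < v := by
      by_contra h
      have := (G v (g v) hv1).mpr (by omega)
      omega
    have hbeven : g v % 2 = 0 := by
      by_contra hodd
      have hB := B (g v) (by omega) (by omega)
      omega
    rcases Nat.eq_zero_or_pos (g (v + 1)) with ha0 | ha1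
    · omega
    · have hfa1 : f (g (v + 1) + 1) = v := by
        have h1 : v ≤ f (g (v + 1) + 1) := (G v (g (v + 1)) hv1).mp (by omega)
        have h2 : ¬ (v + 1 ≤ f (g (v + 1) + 1)) := fun h =>
          absurd ((G (v + 1) (g (v + 1)) (by omega)).mpr h) (by omega)
        omega
      have hfa : v + 1 ≤ f (g (v + 1)) := by
        have h := (G (v + 1) (g (v + 1) - 1) (by omega)).mp (by omega)
        have e : g (v + 1) - 1 + 1 = g (v + 1) := by omega
        rwa [e] at h
      have haeven : g (v + 1) % 2 = 0 := by
        by_contra hodd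
        have hdrop : f (g (v + 1) + 1) < f (g (v + 1)) := by omega
        have hB := B (g (v + 1)) (by omega) hdrop
        have hA := A (g (v + 1)) (by omega) hdrop
        omega
      omega
  · intro C s
    induction s using Nat.strong_induction_on with
    | _ s IH =>
      intro hs hdrop
      by_contra hodd
      have hveven : f s % 2 = 0 := by omega
      have hv1 : 1 ≤ f s := by omega
      have hsb : s ≤ g (f s) := by
        have h := (G (f s) (s - 1) hv1).mpr (by
          have e : s - 1 + 1 = s := by omega
          rw [e])
        omega
      have hbs : g (f s) ≤ s := by
        by_contra h
        have := (G (f s) s hv1).mp (by omega)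
        omega
      have hav : g (f s + 1) < s := by
        by_contra h
        have h2 := (G (f s + 1) (s - 1) (by omega)).mp (by omega)
        have e : s - 1 + 1 = s := by omega
        rw [e] at h2; omega
      have hC := C (f s) hv1 hveven (by omega)
      have haodd : g (f s + 1) % 2 = 1 := by omega
      have ha1 : 1 ≤ g (f s + 1) := by omega
      have hfa1 : f (g (f s + 1) + 1) = f s := by
        have h1 : f s ≤ f (g (f s + 1) + 1) := (G (f s) (g (f s + 1)) hv1).mp (by omega)
        have h2 : ¬ (f s + 1 ≤ f (g (f s + 1) + 1)) := fun h =>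
          absurd ((G (f s + 1) (g (f s + 1)) (by omega)).mpr h) (by omega)
        omega
      have hfa : f s + 1 ≤ f (g (f s + 1)) := by
        have h := (G (f s + 1) (g (f s + 1) - 1) (by omega)).mp (by omega)
        have e : g (f s + 1) - 1 + 1 = g (f s + 1) := by omega
        rwa [e] at h
      have hdropa : f (g (f s + 1) + 1) < f (g (f s + 1)) := by omega
      have hBa := IH (g (f s + 1)) (by omega) haodd hdropa
      have hAa := A (g (f s + 1)) haodd hdropa
      omega
lemma headD_max (d : List ℕ) (hsort : d.Pairwise (· ≥ ·)) :
    ∀ p ∈ d, p ≤ d.headD 0 := by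
  cases d with
  | nil => simp
  | cons a t =>
    intro p hp
    rcases List.mem_cons.mp hp with rfl | hp
    · simp
    · simpa using List.rel_of_pairwise_cons hsort hp

lemma heightT_card (d : List ℕ) (w : ℕ) :
    height (transposeP d) w =
      ((Finset.range (d.headD 0)).filter (fun i => w ≤ height d (i + 1))).card := by
  simp only [height, transposeP, List.filter_map, List.length_map]
  simp [Finset.card, Finset.filter, Finset.range, Multiset.range, Function.comp_def]

lemma galois (d : List ℕ) (hsort : d.Pairwise (· ≥ ·)) (v i : ℕ) (hv : 1 ≤ v) :
    i < height (transposeP d) v ↔ v ≤ height d (i + 1) := by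
  rw [heightT_card]
  constructor
  · intro h
    by_contra hnf
    push_neg at hnf
    have hsub : (Finset.range (d.headD 0)).filter (fun j => v ≤ height d (j + 1)) ⊆
        Finset.range i := by
      intro j hj
      simp only [Finset.mem_filter, Finset.mem_range] at hj ⊢
      by_contra hji
      push_neg at hji
      have := height_antitone d (show i + 1 ≤ j + 1 by omega)
      omega
    have hcard := Finset.card_le_card hsub
    rw [Finset.card_range] at hcard
    omega
  · intro hvf
    have hiD : i < d.headD 0 := by
      have h1 : 1 ≤ height d (i + 1) := le_trans hv hvf
      have hne : d.filter (fun p => decide (i + 1 ≤ p)) ≠ [] := by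
        intro h
        simp only [height, h, List.length_nil] at h1
        omega
      obtain ⟨p, hp⟩ := List.exists_mem_of_ne_nil _ hne
      rw [List.mem_filter] at hp
      have h2 : i + 1 ≤ p := by simpa using hp.2
      have := headD_max d hsort p hp.1
      omega
    have hsub : Finset.range (i + 1) ⊆
        (Finset.range (d.headD 0)).filter (fun j => v ≤ height d (j + 1)) := by
      intro j hj
      simp only [Finset.mem_range] at hj
      simp only [Finset.mem_filter, Finset.mem_range]
      refine ⟨by omega, le_trans hvf (height_antitone d (by omega))⟩
    have hcard := Finset.card_le_card hsub
    rw [Finset.card_range] at hcard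
    omega


/-- For a partition `d` of `2n` lying in `P_1(2n)`: `d ∈ P_{1,1}(2n)`, i.e. `h_d(s)` is odd for
every odd part `s` of `d`, if and only if the transpose partition `dᵗ` lies in `P_0(2n)`,
i.e. every even part of `dᵗ` occurs with even multiplicity. -/
theorem metaplectic_iff_transpose_typeD (n : ℕ) (d : List ℕ)
    (hd : IsPartition (2 * n) d) (hd1 : PEps 1 d) :
    (∀ s ∈ d, s % 2 = 1 → height d s % 2 = 1) ↔ PEps 0 (transposeP d) := by
  obtain ⟨hsort, hpos, -⟩ := hd
  have hmemd : ∀ s : ℕ, s ∈ d ↔ height d (s + 1) < height d s := by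
    intro s
    rw [← List.count_pos_iff]
    have := height_count_aux d s
    omega
  have hA : ∀ s, s % 2 = 1 → height d (s + 1) < height d s →
      height d s % 2 = height d (s + 1) % 2 := by
    intro s hs hdrop
    obtain ⟨k, hk⟩ := hd1 s ((hmemd s).mpr hdrop) (by omega)
    have := height_count_aux d s
    omega
  have hG : ∀ v i, 1 ≤ v → (i < height (transposeP d) v ↔ v ≤ height d (i + 1)) :=
    fun v i hv => galois d hsort v i hv
  have hcore := core_parity (height d) (height (transposeP d)) hG hA
  have hTpos : ∀ v, v ∈ transposeP d → 1 ≤ v := by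
    intro v hvT
    simp only [transposeP, List.mem_map, List.mem_range] at hvT
    obtain ⟨i, hiD, rfl⟩ := hvT
    cases d with
    | nil => simp at hiD
    | cons a t =>
      have ha : a ∈ (a :: t).filter (fun p => decide (i + 1 ≤ p)) := by
        rw [List.mem_filter]
        refine ⟨List.mem_cons_self, by simpa using Nat.succ_le_of_lt (by simpa using hiD)⟩
      have := List.length_pos_iff.mpr (List.ne_nil_of_mem ha)
      simp only [height]; exact this
  constructor
  · intro hL v hvT hv2
    have hv1 : 1 ≤ v := hTpos v hvT
    have hcnt := height_count_aux (transposeP d) v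
    have hdrop : height (transposeP d) (v + 1) < height (transposeP d) v := by
      have : 0 < (transposeP d).count v := List.count_pos_iff.mpr hvT
      omega
    have hB : ∀ s, s % 2 = 1 → height d (s + 1) < height d s → height d s % 2 = 1 := by
      intro s hs hdp
      exact hL s ((hmemd s).mpr hdp) hs
    have hpar := hcore.mp hB v hv1 hv2 hdrop
    exact ⟨(transposeP d).count v / 2, by omega⟩
  · intro hR s hmem hs
    refine hcore.mpr ?_ s hs ((hmemd s).mp hmem)
    intro v hv1 hv2 hdrop
    have hcnt := height_count_aux (transposeP d) v
    have hvT : v ∈ transposeP d := List.count_pos_iff.mp (by omega)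
    obtain ⟨k, hk⟩ := hR v hvT hv2
    omega
end

section
/- Let q = [q_1, ..., q_l] be a partition of n and let r ∈ (−1/2, 1/2]. Then the multiset obtained by concatenating, over 1 ≤ i ≤ l, the row multisets R_r(q_i) = {r + σt : t ∈ ℤ, −⌊q_i/2⌋ ≤ t ≤ ⌊(q_i − 1)/2⌋} equals the multiset in which, for each j ≥ 1, the number y_j(r) = r + (−1)^{j−1} σ ⌊j/2⌋ occurs with multiplicity c_j, where c_j is the j-th part of the transpose partition q^t (and c_j = 0 for j beyond the length of q^t). Here σ = 1 if r ≥ 0 and σ = −1 if r < 0. -/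
/-- `σ(r) = 1` if `r ≥ 0` and `σ(r) = −1` if `r < 0`. -/
noncomputable def sgnR (r : ℝ) : ℝ := if 0 ≤ r then 1 else -1

/-- `y_j(r) = r + (−1)^(j−1) · σ · ⌊j/2⌋`, where `σ = 1` if `r ≥ 0` and `σ = −1` if `r < 0`. -/
noncomputable def yval (r : ℝ) (j : ℕ) : ℝ :=
  r + (-1 : ℝ) ^ (j - 1) * sgnR r * ((j / 2 : ℕ) : ℝ)

/-- The row multiset `R_r(q) = {r + σ t : t ∈ ℤ, −⌊q/2⌋ ≤ t ≤ ⌊(q−1)/2⌋}`. -/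
noncomputable def rowMultiset (r : ℝ) (q : ℕ) : Multiset ℝ :=
  ((Finset.Icc (-((q / 2 : ℕ) : ℤ)) (((q - 1) / 2 : ℕ) : ℤ)).val).map
    (fun t => r + sgnR r * (t : ℝ))

/-- The alternating enumeration `0, -1, 1, -2, 2, …` (0-indexed). -/
def eAlt (j : ℕ) : ℤ := if j % 2 = 0 then (((j + 1) / 2 : ℕ) : ℤ) else -(((j + 1) / 2 : ℕ) : ℤ)

lemma yval_eq (r : ℝ) (j : ℕ) : yval r (j + 1) = r + sgnR r * ((eAlt j : ℤ) : ℝ) := by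
  unfold yval eAlt
  simp only [Nat.add_sub_cancel]
  rcases Nat.even_or_odd j with he | ho
  · rw [Even.neg_one_pow he, if_pos (Nat.even_iff.mp he), Int.cast_natCast]
    ring
  · rw [Odd.neg_one_pow ho, if_neg (by simp [Nat.odd_iff.mp ho]), Int.cast_neg, Int.cast_natCast]
    ring

lemma Icc_val_succ_right (a b : ℤ) (h : a ≤ b + 1) :
    (Finset.Icc a (b + 1)).val = (b + 1) ::ₘ (Finset.Icc a b).val := by
  have : Finset.Icc a (b + 1) = insert (b + 1) (Finset.Icc a b) := by
    ext x; simp only [Finset.mem_Icc, Finset.mem_insert]; omega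
  rw [this, Finset.insert_val, Multiset.ndinsert_of_notMem (by simp)]

lemma Icc_val_pred_left (a b : ℤ) (h : a - 1 ≤ b) :
    (Finset.Icc (a - 1) b).val = (a - 1) ::ₘ (Finset.Icc a b).val := by
  have : Finset.Icc (a - 1) b = insert (a - 1) (Finset.Icc a b) := by
    ext x; simp only [Finset.mem_Icc, Finset.mem_insert]; omega
  rw [this, Finset.insert_val, Multiset.ndinsert_of_notMem (by simp)]

lemma map_eAlt_range (q : ℕ) (hq : 1 ≤ q) :
    Multiset.map eAlt (Multiset.range q)
      = (Finset.Icc (-((q / 2 : ℕ) : ℤ)) (((q - 1) / 2 : ℕ) : ℤ)).val := by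
  induction q, hq using Nat.le_induction with
  | base =>
      norm_num [eAlt]
  | succ q hq ih =>
      rw [Multiset.range_succ, Multiset.map_cons, ih]
      rcases Nat.even_or_odd q with he | ho
      · have hq2 : q % 2 = 0 := Nat.even_iff.mp he
        have hlow : (-(((q + 1) / 2 : ℕ) : ℤ)) = -((q / 2 : ℕ) : ℤ) := by omega
        have hhigh : ((((q + 1) - 1) / 2 : ℕ) : ℤ) = (((q - 1) / 2 : ℕ) : ℤ) + 1 := by omega
        have heq : eAlt q = (((q - 1) / 2 : ℕ) : ℤ) + 1 := by
          simp only [eAlt, if_pos hq2]; omega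
        rw [hlow, hhigh, heq, Icc_val_succ_right _ _ (by omega)]
      · have hq2 : q % 2 = 1 := Nat.odd_iff.mp ho
        have hlow : (-(((q + 1) / 2 : ℕ) : ℤ)) = -((q / 2 : ℕ) : ℤ) - 1 := by omega
        have hhigh : ((((q + 1) - 1) / 2 : ℕ) : ℤ) = (((q - 1) / 2 : ℕ) : ℤ) := by omega
        have heq : eAlt q = -((q / 2 : ℕ) : ℤ) - 1 := by
          simp only [eAlt, if_neg (by omega : ¬ q % 2 = 0)]; omega
        rw [hlow, hhigh, heq, Icc_val_pred_left _ _ (by omega)]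

lemma rowMultiset_def' (r : ℝ) (q : ℕ) : rowMultiset r q =
    Multiset.map (fun t : ℤ => r + sgnR r * (t : ℝ))
      ((Finset.Icc (-((q / 2 : ℕ) : ℤ)) (((q - 1) / 2 : ℕ) : ℤ)).val) := by
  rw [rowMultiset]
  show Multiset.map _ (Multiset.bind _ (fun a : ℤ => {((a : ℝ))})) = _
  rw [Multiset.bind_singleton, Multiset.map_map]
  rfl

lemma rowMultiset_eq (r : ℝ) (q : ℕ) (hq : 0 < q) :
    rowMultiset r q = Multiset.map (fun j => yval r (j + 1)) (Multiset.range q) := by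
  rw [rowMultiset_def', ← map_eAlt_range q hq, Multiset.map_map]
  refine Multiset.map_congr rfl ?_
  intro j _
  simp only [Function.comp_apply]
  rw [yval_eq]

lemma height_nil (s : ℕ) : height [] s = 0 := rfl

lemma height_cons (x : ℕ) (t : List ℕ) (s : ℕ) :
    height (x :: t) s = (if s ≤ x then 1 else 0) + height t s := by
  simp only [height, List.filter]
  by_cases h : s ≤ x <;> simp [h] <;> omega

lemma sum_singletons (g : ℕ → ℝ) (s : Finset ℕ) :
    ∑ j ∈ s, ({g j} : Multiset ℝ) = Multiset.map g s.val := by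
  rw [Finset.sum]
  rw [show (fun j => ({g j} : Multiset ℝ)) = (fun a => ({a} : Multiset ℝ)) ∘ g from rfl]
  rw [← Multiset.map_map, Multiset.sum_map_singleton]

lemma aux_sum (r : ℝ) (m : ℕ) : ∀ (q : List ℕ), (∀ p ∈ q, 0 < p) → (∀ p ∈ q, p ≤ m) →
    (q.map (fun qi => rowMultiset r qi)).sum
      = ∑ j ∈ Finset.range m, Multiset.replicate (height q (j + 1)) (yval r (j + 1)) := by
  intro q
  induction q with
  | nil => intro _ _; simp [height_nil]
  | cons x t ih =>
      intro hpos hle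
      have hx : 0 < x := hpos x (by simp)
      have hxm : x ≤ m := hle x (by simp)
      rw [List.map_cons, List.sum_cons,
        ih (fun p hp => hpos p (by simp [hp])) (fun p hp => hle p (by simp [hp]))]
      have hsplit : ∀ j, Multiset.replicate (height (x :: t) (j + 1)) (yval r (j + 1))
          = Multiset.replicate (if j + 1 ≤ x then 1 else 0) (yval r (j + 1))
            + Multiset.replicate (height t (j + 1)) (yval r (j + 1)) := by
        intro j; rw [height_cons, Multiset.replicate_add]
      simp only [hsplit]
      rw [Finset.sum_add_distrib]
      congr 1
      have : ∀ j, Multiset.replicate (if j + 1 ≤ x then 1 else 0) (yval r (j + 1))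
          = if j + 1 ≤ x then ({yval r (j + 1)} : Multiset ℝ) else 0 := by
        intro j; by_cases h : j + 1 ≤ x <;> simp [h]
      simp only [this]
      rw [← Finset.sum_subset (Finset.range_subset_range.2 hxm)
        (fun j _ hj => by rw [if_neg (by simp at hj; omega)])]
      rw [Finset.sum_congr rfl (fun j hj => if_pos (by simp at hj; omega)),
        sum_singletons, rowMultiset_eq r x hx, Finset.range_val]

lemma list_range_sum (f : ℕ → Multiset ℝ) (m : ℕ) :
    ((List.range m).map f).sum = ∑ j ∈ Finset.range m, f j := by
  rw [Finset.sum, Finset.range_val, Multiset.range, Multiset.map_coe, Multiset.sum_coe]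

/-- Row description of `ξ_r(q)` equals the column description: the concatenation over the
parts `q_i` of the row multisets `R_r(q_i)` is the multiset in which `y_j(r)` occurs with
multiplicity `c_j`, the `j`-th part of the transpose partition `qᵗ` (zero beyond its length). -/
theorem xi_rows_eq_columns (n : ℕ) (q : List ℕ) (hq : IsPartition n q)
    (r : ℝ) (hr1 : -(1 / 2 : ℝ) < r) (hr2 : r ≤ 1 / 2) :
    (q.map (fun qi => rowMultiset r qi)).sum
      = ((List.range (q.headD 0)).map
          (fun j => Multiset.replicate (height q (j + 1)) (yval r (j + 1)))).sum := by
  rw [list_range_sum]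
  obtain ⟨hsort, hpos, -⟩ := hq
  cases q with
  | nil => simp
  | cons x t =>
      refine aux_sum r _ _ hpos ?_
      intro p hp
      rcases List.mem_cons.mp hp with rfl | hp
      · exact le_refl _
      · exact (List.pairwise_cons.mp hsort).1 p hp
end

section
/- Let q be a partition of n with transpose q^t = [c_1 ≥ c_2 ≥ ... ≥ c_m], and let r ∈ (−1/2, 1/2]. For every injective tuple (x_1, ..., x_m) of real numbers with x_j − r ∈ ℤ for all j, one has Σ_{j=1}^m c_j x_j² ≥ Σ_{j=1}^m c_j y_j(r)², where y_j(r) = r + (−1)^{j−1} σ ⌊j/2⌋ with σ = 1 if r ≥ 0 and σ = −1 if r < 0. Moreover, if r ∉ {0, 1/2}, then equality holds if and only if the multiset in which x_j occurs with multiplicity c_j (for 1 ≤ j ≤ m) equals the multiset in which y_j(r) occurs with multiplicity c_j. -/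
lemma sgn_sq (r : ℝ) : sgnR r ^ 2 = 1 := by unfold sgnR; split <;> norm_num

lemma sgn_mul_nonneg (r : ℝ) : 0 ≤ sgnR r * r := by
  unfold sgnR; split <;> rename_i h
  · linarith
  · nlinarith [le_of_not_ge h]

lemma sgn_mul_le (r : ℝ) (hr1 : -(1/2:ℝ) < r) (hr2 : r ≤ 1/2) : sgnR r * r ≤ 1/2 := by
  unfold sgnR; split <;> linarith

lemma yval_odd (r : ℝ) (k : ℕ) : yval r (2*k+1) = r + sgnR r * k := by
  unfold yval
  have h1 : 2*k+1-1 = 2*k := by omega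
  have h2 : (2*k+1)/2 = k := by omega
  rw [h1, h2, pow_mul]
  norm_num

lemma yval_even (r : ℝ) (k : ℕ) : yval r (2*k+2) = r - sgnR r * (k+1) := by
  unfold yval
  have h1 : 2*k+2-1 = 2*k+1 := by omega
  have h2 : (2*k+2)/2 = k+1 := by omega
  rw [h1, h2, pow_succ, pow_mul]
  push_cast
  ring

lemma ysq_step (r : ℝ) (hr1 : -(1/2:ℝ) < r) (hr2 : r ≤ 1/2) (j : ℕ) (hj : 1 ≤ j) :
    yval r j ^ 2 ≤ yval r (j+1) ^ 2 := by
  have hs := sgn_sq r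
  have h0 := sgn_mul_nonneg r
  have hh := sgn_mul_le r hr1 hr2
  rcases Nat.even_or_odd j with he | ho
  · obtain ⟨k, hk⟩ : ∃ k, j = 2*k+2 := by
      obtain ⟨c, hc⟩ := he; exact ⟨(j-2)/2, by omega⟩
    subst hk
    have h3 : 2*k+2+1 = 2*(k+1)+1 := by omega
    rw [h3, yval_even, yval_odd]
    push_cast
    nlinarith [mul_nonneg h0 (by positivity : (0:ℝ) ≤ (k:ℝ)+1)]
  · obtain ⟨k, hk⟩ := ho
    subst hk
    have h3 : 2*k+1+1 = 2*k+2 := by omega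
    rw [h3, yval_even, yval_odd]
    nlinarith [mul_nonneg (by linarith : (0:ℝ) ≤ 1 - 2*(sgnR r * r))
      (by positivity : (0:ℝ) ≤ 2*(k:ℝ)+1), hs]

lemma ysq_mono (r : ℝ) (hr1 : -(1/2:ℝ) < r) (hr2 : r ≤ 1/2) {i j : ℕ} (hi : 1 ≤ i)
    (hij : i ≤ j) : yval r i ^ 2 ≤ yval r j ^ 2 := by
  induction j, hij using Nat.le_induction with
  | base => exact le_refl _
  | succ n hn ih => exact le_trans ih (ysq_step r hr1 hr2 n (le_trans hi hn))

lemma sgn_ne (r : ℝ) : sgnR r ≠ 0 := by unfold sgnR; split <;> norm_num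

lemma yval_inj (r : ℝ) {i j : ℕ} (hi : 1 ≤ i) (hj : 1 ≤ j) (h : yval r i = yval r j) :
    i = j := by
  have hs := sgn_ne r
  have key : ∀ a b : ℕ, 1 ≤ a → 1 ≤ b → yval r a = yval r b → a ≤ b → a = b := by
    intro a b ha hb hab hle
    rcases Nat.even_or_odd a with hea | hoa <;> rcases Nat.even_or_odd b with heb | hob
    · obtain ⟨k1, hk1⟩ : ∃ k, a = 2*k+2 := by obtain ⟨c,hc⟩ := hea; exact ⟨(a-2)/2, by omega⟩
      obtain ⟨k2, hk2⟩ : ∃ k, b = 2*k+2 := by obtain ⟨c,hc⟩ := heb; exact ⟨(b-2)/2, by omega⟩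
      subst hk1; subst hk2
      rw [yval_even, yval_even] at hab
      have : sgnR r * ((k1:ℝ)+1) = sgnR r * ((k2:ℝ)+1) := by linarith
      have : (k1:ℝ) = k2 := by
        have h := mul_left_cancel₀ hs this
        linarith
      have : k1 = k2 := by exact_mod_cast this
      omega
    · obtain ⟨k1, hk1⟩ : ∃ k, a = 2*k+2 := by obtain ⟨c,hc⟩ := hea; exact ⟨(a-2)/2, by omega⟩
      obtain ⟨k2, hk2⟩ := hob
      subst hk1; subst hk2
      rw [yval_even, yval_odd] at hab
      have h1 : sgnR r * ((k1:ℝ) + (k2:ℝ) + 1) = 0 := by ring_nf; ring_nf at hab; linarith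
      have h2 : (k1:ℝ) + (k2:ℝ) + 1 = 0 := by
        rcases mul_eq_zero.mp h1 with h | h
        · exact absurd h hs
        · exact h
      have : (0:ℝ) ≤ (k1:ℝ) + k2 := by positivity
      linarith
    · obtain ⟨k1, hk1⟩ := hoa
      obtain ⟨k2, hk2⟩ : ∃ k, b = 2*k+2 := by obtain ⟨c,hc⟩ := heb; exact ⟨(b-2)/2, by omega⟩
      subst hk1; subst hk2
      rw [yval_odd, yval_even] at hab
      have h1 : sgnR r * ((k1:ℝ) + (k2:ℝ) + 1) = 0 := by ring_nf; ring_nf at hab; linarith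
      have h2 : (k1:ℝ) + (k2:ℝ) + 1 = 0 := by
        rcases mul_eq_zero.mp h1 with h | h
        · exact absurd h hs
        · exact h
      have : (0:ℝ) ≤ (k1:ℝ) + k2 := by positivity
      linarith
    · obtain ⟨k1, hk1⟩ := hoa
      obtain ⟨k2, hk2⟩ := hob
      subst hk1; subst hk2
      rw [yval_odd, yval_odd] at hab
      have : sgnR r * (k1:ℝ) = sgnR r * (k2:ℝ) := by linarith
      have : (k1:ℝ) = k2 := by
        rcases mul_left_cancel₀ hs this with h
        exact h
      have : k1 = k2 := by exact_mod_cast this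
      omega
  rcases le_total i j with hle | hle
  · exact key i j hi hj h hle
  · exact (key j i hj hi h.symm hle).symm

lemma yval_surj (r : ℝ) (t : ℤ) : ∃ j, 1 ≤ j ∧ yval r j = r + t := by
  by_cases h0 : 0 ≤ r
  · have hs : sgnR r = 1 := by unfold sgnR; simp [h0]
    by_cases ht : 0 ≤ t
    · refine ⟨2 * t.toNat + 1, by omega, ?_⟩
      rw [yval_odd, hs]
      have : ((t.toNat : ℤ) : ℝ) = ((t : ℤ) : ℝ) := by congr 1; omega
      push_cast at this ⊢
      linarith
    · push_neg at ht
      refine ⟨2 * ((-t).toNat - 1) + 2, by omega, ?_⟩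
      rw [yval_even, hs]
      have h1 : 1 ≤ (-t).toNat := by omega
      have : (((-t).toNat - 1 : ℕ) : ℝ) = ((-t).toNat : ℝ) - 1 := by
        push_cast [Nat.cast_sub h1]; ring
      rw [this]
      have : (((-t).toNat : ℤ) : ℝ) = (-t : ℤ) := by
        congr 1; omega
      push_cast at this ⊢
      linarith
  · have hs : sgnR r = -1 := by unfold sgnR; simp [h0]
    push_neg at h0
    by_cases ht : t ≤ 0
    · refine ⟨2 * (-t).toNat + 1, by omega, ?_⟩
      rw [yval_odd, hs]
      have : (((-t).toNat : ℤ) : ℝ) = (-t : ℤ) := by congr 1; omega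
      push_cast at this ⊢
      linarith
    · push_neg at ht
      refine ⟨2 * (t.toNat - 1) + 2, by omega, ?_⟩
      rw [yval_even, hs]
      have h1 : 1 ≤ t.toNat := by omega
      have h2 : ((t.toNat - 1 : ℕ) : ℝ) = (t.toNat : ℝ) - 1 := by
        push_cast [Nat.cast_sub h1]; ring
      rw [h2]
      have : ((t.toNat : ℤ) : ℝ) = (t : ℤ) := by congr 1; omega
      push_cast at this ⊢
      linarith

lemma yval_coset (r : ℝ) (j : ℕ) : ∃ t : ℤ, yval r j = r + t := by
  rcases Nat.even_or_odd j with he | ho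
  · obtain ⟨c, hc⟩ := he
    rcases Nat.eq_zero_or_pos j with h0 | hpos
    · subst h0; exact ⟨0, by unfold yval; simp⟩
    · obtain ⟨k, hk⟩ : ∃ k, j = 2*k+2 := ⟨(j-2)/2, by omega⟩
      subst hk
      rw [yval_even]
      unfold sgnR
      split
      · exact ⟨-(k+1), by push_cast; ring⟩
      · exact ⟨k+1, by push_cast; ring⟩
  · obtain ⟨k, hk⟩ := ho
    subst hk
    rw [yval_odd]
    unfold sgnR
    split
    · exact ⟨k, by push_cast; ring⟩
    · exact ⟨-k, by push_cast; ring⟩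

lemma coset_sq_ge (r : ℝ) (hr1 : -(1/2:ℝ) < r) (hr2 : r ≤ 1/2) (k : ℕ)
    (v : ℝ) (ht : ∃ t : ℤ, v = r + t)
    (hv : ∀ j ∈ Finset.Icc 1 k, yval r j ≠ v) : yval r (k+1) ^ 2 ≤ v ^ 2 := by
  obtain ⟨t, rfl⟩ := ht
  obtain ⟨j, hj1, hjv⟩ := yval_surj r t
  have hjk : k + 1 ≤ j := by
    by_contra hc
    exact hv j (Finset.mem_Icc.mpr ⟨hj1, by omega⟩) hjv
  rw [← hjv]
  exact ysq_mono r hr1 hr2 (by omega) hjk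

lemma sq_inj_coset (r : ℝ) (hr1 : -(1/2:ℝ) < r) (hr2 : r ≤ 1/2) (hr0 : r ≠ 0)
    (hrh : r ≠ 1/2) (a b : ℝ) (ha : ∃ t : ℤ, a = r + t) (hb : ∃ t : ℤ, b = r + t)
    (h : a ^ 2 = b ^ 2) : a = b := by
  obtain ⟨s, rfl⟩ := ha
  obtain ⟨t, rfl⟩ := hb
  rcases sq_eq_sq_iff_eq_or_eq_neg.mp h with h1 | h1
  · exact h1
  · exfalso
    have h2 : 2 * r = -((s:ℝ) + t) := by linarith [h1]
    have h3 : 2 * r = ((-(s+t) : ℤ) : ℝ) := by push_cast; linarith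
    have h4 : (-1 : ℝ) < ((-(s+t) : ℤ) : ℝ) := by rw [← h3]; linarith
    have h5 : ((-(s+t) : ℤ) : ℝ) < 1 := by
      rw [← h3]
      rcases lt_or_eq_of_le hr2 with h | h
      · linarith
      · exact absurd h hrh
    have h6 : (-(s+t) : ℤ) = 0 := by
      have g1 : (-1:ℤ) < -(s+t) := by exact_mod_cast (by push_cast; linarith [h4] : ((-1:ℤ):ℝ) < ((-(s+t):ℤ):ℝ))
      have g2 : -(s+t) < (1:ℤ) := by exact_mod_cast (by push_cast; linarith [h5] : ((-(s+t):ℤ):ℝ) < ((1:ℤ):ℝ))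
      omega
    rw [h6] at h3
    simp at h3
    exact hr0 h3

lemma sum_sq_min (r : ℝ) (hr1 : -(1/2:ℝ) < r) (hr2 : r ≤ 1/2) :
    ∀ (k : ℕ) (S : Finset ℝ), S.card = k → (∀ v ∈ S, ∃ t : ℤ, v = r + t) →
      (∑ j ∈ Finset.Icc 1 k, yval r j ^ 2 ≤ ∑ v ∈ S, v ^ 2) ∧
      (r ≠ 0 → r ≠ 1/2 → (∑ v ∈ S, v ^ 2 = ∑ j ∈ Finset.Icc 1 k, yval r j ^ 2) →
        S = (Finset.Icc 1 k).image (yval r)) := by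
  intro k
  induction k with
  | zero =>
    intro S hcard _
    rw [Finset.card_eq_zero] at hcard
    subst hcard
    simp
  | succ k ih =>
    intro S hcard hcoset
    -- find v ∈ S not in the image of Icc 1 k
    have hex : ∃ v ∈ S, v ∉ (Finset.Icc 1 k).image (yval r) := by
      by_contra hc
      push_neg at hc
      have hsub : S ⊆ (Finset.Icc 1 k).image (yval r) := fun v hv => hc v hv
      have := Finset.card_le_card hsub
      have := Finset.card_image_le (f := yval r) (s := Finset.Icc 1 k)
      rw [Nat.card_Icc] at this
      omega
    obtain ⟨v, hvS, hvn⟩ := hex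
    have hvbig : yval r (k+1) ^ 2 ≤ v ^ 2 := by
      apply coset_sq_ge r hr1 hr2 k v (hcoset v hvS)
      intro j hj hne
      exact hvn (Finset.mem_image.mpr ⟨j, hj, hne⟩)
    have hcard' : (S.erase v).card = k := by
      rw [Finset.card_erase_of_mem hvS, hcard]
      omega
    have hcoset' : ∀ w ∈ S.erase v, ∃ t : ℤ, w = r + t :=
      fun w hw => hcoset w (Finset.mem_of_mem_erase hw)
    obtain ⟨ih1, ih2⟩ := ih (S.erase v) hcard' hcoset'
    have hsplitS : ∑ w ∈ S, w ^ 2 = ∑ w ∈ S.erase v, w ^ 2 + v ^ 2 :=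
      (Finset.sum_erase_add S _ hvS).symm
    have hsplitY : ∑ j ∈ Finset.Icc 1 (k+1), yval r j ^ 2
        = ∑ j ∈ Finset.Icc 1 k, yval r j ^ 2 + yval r (k+1) ^ 2 :=
      Finset.sum_Icc_succ_top (by omega) _
    constructor
    · rw [hsplitS, hsplitY]
      exact add_le_add ih1 hvbig
    · intro hr0 hrh heq
      rw [hsplitS, hsplitY] at heq
      have e1 : v ^ 2 = yval r (k+1) ^ 2 := by linarith
      have e2 : ∑ w ∈ S.erase v, w ^ 2 = ∑ j ∈ Finset.Icc 1 k, yval r j ^ 2 := by linarith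
      have hS' := ih2 hr0 hrh e2
      have hv' : v = yval r (k+1) :=
        sq_inj_coset r hr1 hr2 hr0 hrh v _ (hcoset v hvS) (yval_coset r (k+1)) e1
      have hIcc : Finset.Icc 1 (k+1) = insert (k+1) (Finset.Icc 1 k) := by
        ext a; simp [Finset.mem_Icc, Finset.mem_insert]; omega
      rw [hIcc, Finset.image_insert, ← hS', ← hv', Finset.insert_erase hvS]

lemma swapM {M : Type*} [AddCommMonoid M] (L : List ℕ) (m : ℕ) (hL : ∀ p ∈ L, p ≤ m)
    (a : ℕ → M) :
    ∑ j ∈ Finset.Icc 1 m, (L.filter (fun p => decide (j ≤ p))).length • a j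
      = (L.map (fun p => ∑ j ∈ Finset.Icc 1 p, a j)).sum := by
  induction L with
  | nil => simp
  | cons p L ihL =>
    have hp : p ≤ m := hL p (by simp)
    have hL' : ∀ q ∈ L, q ≤ m := fun q hq => hL q (by simp [hq])
    simp only [List.map_cons, List.sum_cons]
    have hfil : ∀ j : ℕ, ((p :: L).filter (fun p' => decide (j ≤ p'))).length
        = (if j ≤ p then 1 else 0) + (L.filter (fun p' => decide (j ≤ p'))).length := by
      intro j
      by_cases h : j ≤ p <;> simp [List.filter_cons, h] <;> omega
    calc ∑ j ∈ Finset.Icc 1 m, ((p :: L).filter (fun p' => decide (j ≤ p'))).length • a j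
        = ∑ j ∈ Finset.Icc 1 m, ((if j ≤ p then 1 else 0) • a j
            + (L.filter (fun p' => decide (j ≤ p'))).length • a j) := by
          apply Finset.sum_congr rfl
          intro j _
          rw [hfil j, add_smul]
      _ = (∑ j ∈ Finset.Icc 1 m, (if j ≤ p then 1 else 0) • a j)
            + ∑ j ∈ Finset.Icc 1 m, (L.filter (fun p' => decide (j ≤ p'))).length • a j := by
          rw [Finset.sum_add_distrib]
      _ = (∑ j ∈ Finset.Icc 1 p, a j) + (L.map (fun p => ∑ j ∈ Finset.Icc 1 p, a j)).sum := by
          rw [ihL hL']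
          congr 1
          have step1 : ∑ j ∈ Finset.Icc 1 m, (if j ≤ p then 1 else 0) • a j
              = ∑ j ∈ Finset.Icc 1 m, (if j ∈ Finset.Icc 1 p then a j else 0) := by
            apply Finset.sum_congr rfl
            intro j hj
            rw [Finset.mem_Icc] at hj
            by_cases h : j ≤ p
            · simp [h, Finset.mem_Icc, hj.1]
            · simp [h, Finset.mem_Icc]
          rw [step1, Finset.sum_ite_mem]
          congr 1
          ext a'
          simp only [Finset.mem_inter, Finset.mem_Icc]
          omega

lemma range_to_Icc {M : Type*} [AddCommMonoid M] (m : ℕ) (f : ℕ → M) :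
    ((List.range m).map (fun j => f (j+1))).sum = ∑ j ∈ Finset.Icc 1 m, f j := by
  induction m with
  | zero => simp
  | succ m ih =>
    rw [List.range_succ, List.map_append, List.sum_append,
      Finset.sum_Icc_succ_top (by omega)]
    simp [ih]

lemma nsmul_singleton_ms {β : Type*} (n : ℕ) (a : β) :
    n • ({a} : Multiset β) = Multiset.replicate n a := by
  induction n with
  | zero => simp
  | succ n ih => rw [succ_nsmul, ih, Multiset.replicate_succ]
                 rw [add_comm]
                 rfl

lemma sum_map_singleton_ms {α β : Type*} (s : Multiset α) (f : α → β) :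
    (s.map (fun j => ({f j} : Multiset β))).sum = s.map f := by
  induction s using Multiset.induction with
  | empty => simp
  | cons a s ih => simp [ih]

noncomputable def sqHom : Multiset ℝ →+ ℝ where
  toFun := fun M => (M.map (fun v => v ^ 2)).sum
  map_zero' := by simp
  map_add' := by intro A B; simp

lemma list_sum_termwise_eq (L : List ℕ) (f g : ℕ → ℝ) (h : ∀ p ∈ L, f p ≤ g p)
    (heq : (L.map f).sum = (L.map g).sum) : ∀ p ∈ L, f p = g p := by
  induction L with
  | nil => simp
  | cons p L ih =>
    simp only [List.map_cons, List.sum_cons] at heq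
    have h1 : f p ≤ g p := h p (by simp)
    have h2 : (L.map f).sum ≤ (L.map g).sum :=
      List.sum_le_sum (fun q hq => h q (by simp [hq]))
    have e1 : f p = g p := by linarith
    have e2 : (L.map f).sum = (L.map g).sum := by linarith
    intro q hq
    rcases List.mem_cons.mp hq with rfl | hq'
    · exact e1
    · exact ih (fun q' hq' => h q' (by simp [hq'])) e2 q hq'


/-- Lemma 3.7 (gl_min): with `m` the number of parts of `qᵗ` and `c_j = h_q(j)`, for every
injective tuple `(x_1, …, x_m)` with `x_j − r ∈ ℤ`, one has
`∑ c_j x_j² ≥ ∑ c_j y_j(r)²`; when `r ∉ {0, 1/2}`, equality holds iff the multiset in which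
`x_j` occurs with multiplicity `c_j` equals the one in which `y_j(r)` does. -/
theorem xi_norm_min (n : ℕ) (q : List ℕ) (hq : IsPartition n q)
    (r : ℝ) (hr1 : -(1 / 2 : ℝ) < r) (hr2 : r ≤ 1 / 2)
    (x : ℕ → ℝ)
    (hinj : ∀ i j, 1 ≤ i → i ≤ q.headD 0 → 1 ≤ j → j ≤ q.headD 0 → x i = x j → i = j)
    (hint : ∀ j, 1 ≤ j → j ≤ q.headD 0 → ∃ t : ℤ, x j - r = (t : ℝ)) :
    (∑ j ∈ Finset.Icc 1 (q.headD 0), (height q j : ℝ) * (yval r j) ^ 2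
        ≤ ∑ j ∈ Finset.Icc 1 (q.headD 0), (height q j : ℝ) * (x j) ^ 2) ∧
    (r ≠ 0 → r ≠ 1 / 2 →
      ((∑ j ∈ Finset.Icc 1 (q.headD 0), (height q j : ℝ) * (x j) ^ 2
          = ∑ j ∈ Finset.Icc 1 (q.headD 0), (height q j : ℝ) * (yval r j) ^ 2) ↔
        ((List.range (q.headD 0)).map
            (fun j => Multiset.replicate (height q (j + 1)) (x (j + 1)))).sum
          = ((List.range (q.headD 0)).map
              (fun j => Multiset.replicate (height q (j + 1)) (yval r (j + 1)))).sum)) := by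
  set m := q.headD 0 with hm
  -- every part is at most m
  have hqm : ∀ p ∈ q, p ≤ m := by
    cases q with
    | nil => intro p hp; simp at hp
    | cons h t =>
      intro p hp
      rcases List.mem_cons.mp hp with rfl | hp'
      · exact le_refl _
      · exact (List.pairwise_cons.mp hq.1).1 p hp'
  -- real-sum bridge
  have hsum : ∀ a : ℕ → ℝ, ∑ j ∈ Finset.Icc 1 m, (height q j : ℝ) * a j
      = (q.map (fun p => ∑ j ∈ Finset.Icc 1 p, a j)).sum := by
    intro a
    rw [← swapM q m hqm a]
    apply Finset.sum_congr rfl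
    intro j _
    rw [nsmul_eq_mul]
    rfl
  -- injectivity of x on relevant intervals
  have hinjOn : ∀ p, p ≤ m → Set.InjOn x ↑(Finset.Icc 1 p) := by
    intro p hp i hi j hj hxy
    simp only [Finset.coe_Icc, Set.mem_Icc] at hi hj
    exact hinj i j hi.1 (le_trans hi.2 hp) hj.1 (le_trans hj.2 hp) hxy
  have hyinjOn : ∀ p : ℕ, Set.InjOn (yval r) ↑(Finset.Icc 1 p) := by
    intro p i hi j hj hxy
    simp only [Finset.coe_Icc, Set.mem_Icc] at hi hj
    exact yval_inj r hi.1 hj.1 hxy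
  -- per-part facts
  have hcard : ∀ p, p ≤ m → ((Finset.Icc 1 p).image x).card = p := by
    intro p hp
    rw [Finset.card_image_of_injOn (hinjOn p hp), Nat.card_Icc]
    omega
  have hcoset : ∀ p, p ≤ m → ∀ v ∈ (Finset.Icc 1 p).image x, ∃ t : ℤ, v = r + t := by
    intro p hp v hv
    obtain ⟨j, hj, rfl⟩ := Finset.mem_image.mp hv
    rw [Finset.mem_Icc] at hj
    obtain ⟨t, ht⟩ := hint j hj.1 (le_trans hj.2 hp)
    exact ⟨t, by linarith⟩
  have himg : ∀ p, p ≤ m → ∑ v ∈ (Finset.Icc 1 p).image x, v ^ 2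
      = ∑ j ∈ Finset.Icc 1 p, x j ^ 2 := by
    intro p hp
    rw [Finset.sum_image]
    intro i hi j hj h
    exact hinjOn p hp (by simp [Finset.mem_Icc] at hi ⊢; exact hi)
      (by simp [Finset.mem_Icc] at hj ⊢; exact hj) h
  -- per-part inequality
  have hpart : ∀ p ∈ q, ∑ j ∈ Finset.Icc 1 p, yval r j ^ 2 ≤ ∑ j ∈ Finset.Icc 1 p, x j ^ 2 := by
    intro p hp
    have h := (sum_sq_min r hr1 hr2 p ((Finset.Icc 1 p).image x) (hcard p (hqm p hp))
      (hcoset p (hqm p hp))).1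
    rwa [himg p (hqm p hp)] at h
  have hineq : ∑ j ∈ Finset.Icc 1 m, (height q j : ℝ) * yval r j ^ 2
      ≤ ∑ j ∈ Finset.Icc 1 m, (height q j : ℝ) * x j ^ 2 := by
    rw [hsum (fun j => yval r j ^ 2), hsum (fun j => x j ^ 2)]
    exact List.sum_le_sum hpart
  refine ⟨hineq, ?_⟩
  intro hr0 hrh
  -- multiset bridges
  have hmsM : ∀ a : ℕ → ℝ,
      ((List.range m).map (fun j => Multiset.replicate (height q (j + 1)) (a (j + 1)))).sum
        = (q.map (fun p => (Finset.Icc 1 p).val.map a)).sum := by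
    intro a
    rw [range_to_Icc m (fun j => Multiset.replicate (height q j) (a j))]
    have h1 : ∑ j ∈ Finset.Icc 1 m, Multiset.replicate (height q j) (a j)
        = ∑ j ∈ Finset.Icc 1 m,
            (q.filter (fun p => decide (j ≤ p))).length • ({a j} : Multiset ℝ) := by
      apply Finset.sum_congr rfl
      intro j _
      rw [nsmul_singleton_ms]
      rfl
    rw [h1, swapM q m hqm (fun j => ({a j} : Multiset ℝ))]
    congr 1
    apply List.map_congr_left
    intro p _
    rw [Finset.sum_eq_multiset_sum, sum_map_singleton_ms]
  -- the squared-sum of the multiset recovers the weighted sum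
  have hsq : ∀ a : ℕ → ℝ,
      sqHom (((List.range m).map
          (fun j => Multiset.replicate (height q (j + 1)) (a (j + 1)))).sum)
        = ∑ j ∈ Finset.Icc 1 m, (height q j : ℝ) * a j ^ 2 := by
    intro a
    rw [range_to_Icc m (fun j => Multiset.replicate (height q j) (a j)),
      map_sum sqHom (fun j => Multiset.replicate (height q j) (a j)) (Finset.Icc 1 m)]
    apply Finset.sum_congr rfl
    intro j _
    show ((Multiset.replicate (height q j) (a j)).map (fun v => v ^ 2)).sum = _
    rw [Multiset.map_replicate, Multiset.sum_replicate, nsmul_eq_mul]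
  constructor
  · -- equality of sums ⇒ equality of multisets
    intro heq
    rw [hmsM x, hmsM (yval r)]
    congr 1
    apply List.map_congr_left
    intro p hp
    have hpm := hqm p hp
    -- termwise equality of the per-part real sums
    have hterm : ∀ p' ∈ q, (fun p => ∑ j ∈ Finset.Icc 1 p, yval r j ^ 2) p'
        = (fun p => ∑ j ∈ Finset.Icc 1 p, x j ^ 2) p' := by
      apply list_sum_termwise_eq q _ _ hpart
      rw [← hsum (fun j => yval r j ^ 2), ← hsum (fun j => x j ^ 2)]
      linarith [heq]
    have heqp : ∑ v ∈ (Finset.Icc 1 p).image x, v ^ 2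
        = ∑ j ∈ Finset.Icc 1 p, yval r j ^ 2 := by
      rw [himg p hpm]
      exact (hterm p hp).symm
    have hSeq := (sum_sq_min r hr1 hr2 p ((Finset.Icc 1 p).image x) (hcard p hpm)
      (hcoset p hpm)).2 hr0 hrh heqp
    have e1 : (Finset.Icc 1 p).val.map x = ((Finset.Icc 1 p).image x).val :=
      (Finset.image_val_of_injOn (hinjOn p hpm)).symm
    have e2 : ((Finset.Icc 1 p).image (yval r)).val = (Finset.Icc 1 p).val.map (yval r) :=
      Finset.image_val_of_injOn (hyinjOn p)
    rw [e1, hSeq, e2]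
  · -- equality of multisets ⇒ equality of sums
    intro heq
    have := congrArg sqHom heq
    rw [hsq x, hsq (yval r)] at this
    exact this
end

section
/- Let q₁ and q₂ be partitions of n with q₁ ⪯ q₂ in the dominance order, and let r ∈ (−1/2, 1/2]. For j ≥ 1 write c_j(q) for the j-th part of the transpose q^t (set to 0 for j beyond the length of q^t), and y_j(r) = r + (−1)^{j−1} σ ⌊j/2⌋ with σ = 1 if r ≥ 0 and σ = −1 if r < 0. Then Σ_{j≥1} c_j(q₁) y_j(r)² ≤ Σ_{j≥1} c_j(q₂) y_j(r)², i.e. ‖ξ_r(q₁)‖ ≤ ‖ξ_r(q₂)‖. Moreover, if r ∉ {0, 1/2}, equality holds if and only if q₁ = q₂. -/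
namespace XiAux

/-- `T l k = ∑ min(p, k)` over parts `p`. -/
def Tf (l : List ℕ) (k : ℕ) : ℕ := (l.map (fun p => min p k)).sum

/-- `M l k = ∑ (p - k)⁺` over parts `p`. -/
def Mf (l : List ℕ) (k : ℕ) : ℕ := (l.map (fun p => p - k)).sum

lemma height_cons (p : ℕ) (t : List ℕ) (j : ℕ) :
    height (p :: t) j = (if j ≤ p then 1 else 0) + height t j := by
  by_cases h : j ≤ p <;> simp [height, List.filter_cons, h, Nat.add_comm]

lemma sum_height (l : List ℕ) (k : ℕ) :
    ∑ j ∈ Finset.Icc 1 k, height l j = Tf l k := by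
  induction l with
  | nil => simp [height, Tf]
  | cons p t ih =>
    have hfe : (Finset.Icc 1 k).filter (fun j => j ≤ p) = Finset.Icc 1 (min p k) := by
      ext j; simp only [Finset.mem_filter, Finset.mem_Icc]; omega
    have hone : ∑ j ∈ Finset.Icc 1 k, (if j ≤ p then 1 else 0) = min p k := by
      rw [← Finset.sum_filter, hfe]
      simp [Nat.card_Icc]
    simp only [height_cons, Finset.sum_add_distrib, ih, hone, Tf, List.map_cons, List.sum_cons]

lemma T_add_M (l : List ℕ) (k : ℕ) : Tf l k + Mf l k = l.sum := by
  induction l with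
  | nil => simp [Tf, Mf]
  | cons p t ih =>
    simp only [Tf, Mf, List.map_cons, List.sum_cons] at *
    omega

lemma M_append (l1 l2 : List ℕ) (k : ℕ) : Mf (l1 ++ l2) k = Mf l1 k + Mf l2 k := by
  simp [Mf]

lemma sum_le_M (u : List ℕ) (k : ℕ) : u.sum ≤ Mf u k + u.length * k := by
  induction u with
  | nil => simp [Mf]
  | cons p t ih =>
    have h : p ≤ p - k + k := by omega
    simp only [Mf, List.map_cons, List.sum_cons, List.length_cons] at *
    calc p + t.sum ≤ (p - k + k) + ((t.map fun p => p - k).sum + t.length * k) :=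
          Nat.add_le_add h ih
      _ = p - k + (t.map fun p => p - k).sum + (t.length + 1) * k := by ring

lemma take_sum_le (l : List ℕ) (j k : ℕ) : (l.take j).sum ≤ Mf l k + j * k := by
  have h1 : Mf (l.take j) k ≤ Mf l k := by
    conv_rhs => rw [← List.take_append_drop j l]
    rw [M_append]; omega
  have h2 : (l.take j).length ≤ j := by
    simp [List.length_take]
  have h3 := sum_le_M (l.take j) k
  have h4 : (l.take j).length * k ≤ j * k := Nat.mul_le_mul_right k h2
  omega

lemma height_eq_zero_of_forall {l : List ℕ} {k : ℕ} (h : ∀ p ∈ l, p < k) :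
    height l k = 0 := by
  rw [height, List.length_eq_zero_iff, List.filter_eq_nil_iff]
  intro p hp
  simpa using Nat.not_le.2 (h p hp)

lemma Mf_eq_zero {l : List ℕ} {k : ℕ} (h : ∀ p ∈ l, p ≤ k) : Mf l k = 0 := by
  apply List.sum_eq_zero
  intro x hx
  simp only [List.mem_map] at hx
  obtain ⟨p, hp, rfl⟩ := hx
  exact Nat.sub_eq_zero_of_le (h p hp)

lemma M_eq_of_sorted : ∀ {l : List ℕ}, l.Pairwise (· ≥ ·) → ∀ k : ℕ,
    Mf l k + (height l (k+1)) * k = (l.take (height l (k+1))).sum := by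
  intro l
  induction l with
  | nil => intro _ k; simp [Mf, height]
  | cons p t ih =>
    intro hs k
    rw [List.pairwise_cons] at hs
    by_cases hp : k + 1 ≤ p
    · have hh : height (p :: t) (k+1) = 1 + height t (k+1) := by
        rw [height_cons, if_pos hp]
      have hM : Mf (p :: t) k = (p - k) + Mf t k := by simp [Mf]
      have iht := ih hs.2 k
      rw [hh, hM]
      have htake : (p :: t).take (1 + height t (k+1)) = p :: t.take (height t (k+1)) := by
        rw [Nat.add_comm]; rfl
      rw [htake, List.sum_cons, Nat.add_mul, one_mul]
      omega
    · have hall : ∀ q ∈ p :: t, q ≤ k := by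
        intro q hq
        rcases List.mem_cons.1 hq with rfl | hq
        · omega
        · exact le_trans (hs.1 q hq) (by omega)
      have hh : height (p :: t) (k+1) = 0 :=
        height_eq_zero_of_forall (fun q hq => Nat.lt_succ_of_le (hall q hq))
      rw [hh, Mf_eq_zero hall]
      simp

lemma part_le_n {n : ℕ} {l : List ℕ} (h : IsPartition n l) : ∀ p ∈ l, p ≤ n := by
  intro p hp
  have := List.le_sum_of_mem hp
  have hs := h.2.2
  omega

lemma M_mono {n : ℕ} {q1 q2 : List ℕ} (h1 : IsPartition n q1) (hdom : Dom q1 q2)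
    (k : ℕ) : Mf q1 k ≤ Mf q2 k := by
  have hB := M_eq_of_sorted h1.1 k
  have hA := take_sum_le q2 (height q1 (k+1)) k
  have hd := hdom (height q1 (k+1))
  omega

lemma T_antitone {n : ℕ} {q1 q2 : List ℕ} (h1 : IsPartition n q1) (h2 : IsPartition n q2)
    (hdom : Dom q1 q2) (k : ℕ) : Tf q2 k ≤ Tf q1 k := by
  have e1 := T_add_M q1 k
  have e2 := T_add_M q2 k
  have hM := M_mono h1 hdom k
  rw [h1.2.2] at e1
  rw [h2.2.2] at e2
  omega

lemma T_top {n : ℕ} {l : List ℕ} (h : IsPartition n l) : Tf l n = n := by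
  have hmap : l.map (fun p => min p n) = l.map id :=
    List.map_congr_left fun p hp => min_eq_left (part_le_n h p hp)
  rw [Tf, hmap, List.map_id, h.2.2]

lemma height_top {n : ℕ} {l : List ℕ} (h : IsPartition n l) {j : ℕ} (hj : n < j) :
    height l j = 0 :=
  height_eq_zero_of_forall fun p hp => lt_of_le_of_lt (part_le_n h p hp) hj

lemma height_count (l : List ℕ) (v : ℕ) : height l v = l.count v + height l (v+1) := by
  induction l with
  | nil => simp [height]
  | cons p t ih =>
    rw [height_cons, height_cons, List.count_cons, ih]
    by_cases h1 : v ≤ p <;> by_cases h2 : v + 1 ≤ p <;> by_cases h3 : p = v <;>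
      simp [h1, h2, h3] <;> omega

lemma T_split (l : List ℕ) (k : ℕ) : Tf l k + height l (k+1) = Tf l (k+1) := by
  rw [← sum_height, ← sum_height, Finset.sum_Icc_succ_top (by omega : 1 ≤ k + 1)]

lemma eq_of_height_eq {n : ℕ} {q1 q2 : List ℕ} (h1 : IsPartition n q1)
    (h2 : IsPartition n q2) (hh : ∀ v, 1 ≤ v → height q1 v = height q2 v) :
    q1 = q2 := by
  have hc : ∀ v, q1.count v = q2.count v := by
    intro v
    cases v with
    | zero =>
      rw [List.count_eq_zero_of_not_mem, List.count_eq_zero_of_not_mem]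
      · intro h; exact absurd (h2.2.1 0 h) (by omega)
      · intro h; exact absurd (h1.2.1 0 h) (by omega)
    | succ m =>
      have e1 := height_count q1 (m+1)
      have e2 := height_count q2 (m+1)
      have a1 := hh (m+1) (by omega)
      have a2 := hh (m+2) (by omega)
      have e' : m + 1 + 1 = m + 2 := rfl
      rw [e'] at e1 e2
      omega
  exact List.Perm.eq_of_pairwise (fun a b _ _ h h' => Nat.le_antisymm h' h) h1.1 h2.1 (List.perm_iff_count.mpr hc)

/-! ### Real-valued lemmas -/

lemma yval_one (r : ℝ) : yval r 1 = r := by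
  simp [yval]

lemma yval_odd (r : ℝ) (k : ℕ) : yval r (2*k+1) = r + sgnR r * k := by
  have h1 : 2*k+1 - 1 = 2*k := by omega
  have h2 : (2*k+1)/2 = k := by omega
  rw [yval, h1, h2, Even.neg_one_pow ⟨k, by ring⟩]
  ring

lemma yval_even (r : ℝ) (k : ℕ) : yval r (2*k+2) = r - sgnR r * (k+1) := by
  have h1 : 2*k+2 - 1 = 2*k+1 := by omega
  have h2 : (2*k+2)/2 = k+1 := by omega
  rw [yval, h1, h2, Odd.neg_one_pow ⟨k, by ring⟩]
  push_cast
  ring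

lemma sq_mono {r : ℝ} (hr1 : -(1/2 : ℝ) < r) (hr2 : r ≤ 1/2) (i : ℕ) (hi : 1 ≤ i) :
    (yval r i)^2 ≤ (yval r (i+1))^2 := by
  rcases Nat.even_or_odd i with ⟨k, hk⟩ | ⟨k, hk⟩
  · -- i even, i ≥ 1 so i = 2k with k ≥ 1; write i = 2k'+2
    obtain ⟨k', rfl⟩ : ∃ k', k = k' + 1 := ⟨k - 1, by omega⟩
    have e1 : i = 2*k'+2 := by omega
    have e2 : i + 1 = 2*(k'+1)+1 := by omega
    rw [e2, e1, yval_even, yval_odd]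
    have hc : (0:ℝ) ≤ (k' : ℝ) := Nat.cast_nonneg k'
    by_cases hr : 0 ≤ r <;> simp only [sgnR, hr, ite_true, ite_false] <;>
      push_cast <;> nlinarith
  · obtain ⟨k, rfl⟩ : ∃ m, i = 2*m+1 := ⟨k, by omega⟩
    have e2 : 2*k+1+1 = 2*k+2 := by omega
    rw [e2, yval_odd, yval_even]
    have hc : (0:ℝ) ≤ (k : ℝ) := Nat.cast_nonneg k
    by_cases hr : 0 ≤ r <;> simp only [sgnR, hr, ite_true, ite_false] <;>
      push_cast <;> nlinarith

lemma sq_strict {r : ℝ} (hr1 : -(1/2 : ℝ) < r) (hr2 : r ≤ 1/2) (h0 : r ≠ 0)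
    (h12 : r ≠ 1/2) (i : ℕ) (hi : 1 ≤ i) :
    (yval r i)^2 < (yval r (i+1))^2 := by
  have hlt : r < 1/2 := lt_of_le_of_ne hr2 h12
  rcases Nat.even_or_odd i with ⟨k, hk⟩ | ⟨k, hk⟩
  · obtain ⟨k', rfl⟩ : ∃ k', k = k' + 1 := ⟨k - 1, by omega⟩
    have e1 : i = 2*k'+2 := by omega
    have e2 : i + 1 = 2*(k'+1)+1 := by omega
    rw [e2, e1, yval_even, yval_odd]
    have hc : (0:ℝ) ≤ (k' : ℝ) := Nat.cast_nonneg k'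
    by_cases hr : 0 ≤ r <;> simp only [sgnR, hr, ite_true, ite_false] <;> push_cast
    · have hr' : 0 < r := lt_of_le_of_ne hr (Ne.symm h0)
      nlinarith
    · push_neg at hr
      nlinarith
  · obtain ⟨k, rfl⟩ : ∃ m, i = 2*m+1 := ⟨k, by omega⟩
    have e2 : 2*k+1+1 = 2*k+2 := by omega
    rw [e2, yval_odd, yval_even]
    have hc : (0:ℝ) ≤ (k : ℝ) := Nat.cast_nonneg k
    by_cases hr : 0 ≤ r <;> simp only [sgnR, hr, ite_true, ite_false] <;> push_cast
    · nlinarith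
    · push_neg at hr
      nlinarith

lemma telescope (A : ℕ → ℝ) (j : ℕ) :
    ∑ i ∈ Finset.Icc 1 j, (A i - A (i-1)) = A j - A 0 := by
  rw [← Finset.Ico_add_one_right_eq_Icc, Finset.sum_Ico_eq_sum_range]
  have h : j + 1 - 1 = j := by omega
  rw [h]
  rw [Finset.sum_congr rfl (fun i _ => by
    rw [show 1 + i = i + 1 from by omega, show i + 1 - 1 = i from by omega])]
  exact Finset.sum_range_sub A j

lemma abel (c A : ℕ → ℝ) (hA : A 0 = 0) (n : ℕ) :
    ∑ j ∈ Finset.Icc 1 n, c j * A j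
      = ∑ i ∈ Finset.Icc 1 n, (A i - A (i-1)) *
          ((∑ j ∈ Finset.Icc 1 n, c j) - ∑ j ∈ Finset.Icc 1 (i-1), c j) := by
  have key : ∀ i ∈ Finset.Icc 1 n,
      (∑ j ∈ Finset.Icc 1 n, c j) - ∑ j ∈ Finset.Icc 1 (i-1), c j
        = ∑ j ∈ Finset.Ico i (n+1), c j := by
    intro i hi
    rw [Finset.mem_Icc] at hi
    have hi1 : 1 ≤ i := hi.1
    have hsplit : (∑ j ∈ Finset.Ico 1 i, c j) + ∑ j ∈ Finset.Ico i (n+1), c j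
        = ∑ j ∈ Finset.Ico 1 (n+1), c j :=
      Finset.sum_Ico_consecutive c (by omega) (by omega)
    have hIco : Finset.Ico 1 i = Finset.Icc 1 (i-1) := by
      ext x
      simp only [Finset.mem_Ico, Finset.mem_Icc]
      omega
    rw [← Finset.Ico_add_one_right_eq_Icc, ← hsplit, hIco]
    ring
  have hR : ∑ i ∈ Finset.Icc 1 n, (A i - A (i-1)) *
        ((∑ j ∈ Finset.Icc 1 n, c j) - ∑ j ∈ Finset.Icc 1 (i-1), c j)
      = ∑ i ∈ Finset.Icc 1 n, (A i - A (i-1)) * ∑ j ∈ Finset.Ico i (n+1), c j :=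
    Finset.sum_congr rfl (fun i hi => by rw [key i hi])
  rw [hR]
  have swap := Finset.sum_Ico_Ico_comm 1 (n+1) (fun i j => (A i - A (i-1)) * c j)
  calc ∑ j ∈ Finset.Icc 1 n, c j * A j
      = ∑ j ∈ Finset.Ico 1 (n+1), ∑ i ∈ Finset.Ico 1 (j+1), (A i - A (i-1)) * c j := by
        rw [Finset.Ico_add_one_right_eq_Icc]
        refine Finset.sum_congr rfl (fun j hj => ?_)
        rw [Finset.Ico_add_one_right_eq_Icc, ← Finset.sum_mul, telescope, hA, sub_zero, mul_comm]
    _ = ∑ i ∈ Finset.Ico 1 (n+1), ∑ j ∈ Finset.Ico i (n+1), (A i - A (i-1)) * c j :=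
        swap.symm
    _ = ∑ i ∈ Finset.Icc 1 n, (A i - A (i-1)) * ∑ j ∈ Finset.Ico i (n+1), c j := by
        rw [Finset.Ico_add_one_right_eq_Icc]
        exact Finset.sum_congr rfl (fun i _ => by rw [Finset.mul_sum])

end XiAux

/-- Lemma 3.9 (gl_compare): if `q₁ ⪯ q₂` are partitions of `n` and `r ∈ (−1/2, 1/2]`, then
`∑_j c_j(q₁) y_j(r)² ≤ ∑_j c_j(q₂) y_j(r)²`, i.e. `‖ξ_r(q₁)‖ ≤ ‖ξ_r(q₂)‖`; if moreover
`r ∉ {0, 1/2}`, equality holds iff `q₁ = q₂`. -/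
theorem xi_norm_compare (n : ℕ) (q1 q2 : List ℕ)
    (h1 : IsPartition n q1) (h2 : IsPartition n q2) (hdom : Dom q1 q2)
    (r : ℝ) (hr1 : -(1 / 2 : ℝ) < r) (hr2 : r ≤ 1 / 2) :
    (∑ j ∈ Finset.Icc 1 n, (height q1 j : ℝ) * (yval r j) ^ 2
        ≤ ∑ j ∈ Finset.Icc 1 n, (height q2 j : ℝ) * (yval r j) ^ 2) ∧
    (r ≠ 0 → r ≠ 1 / 2 →
      ((∑ j ∈ Finset.Icc 1 n, (height q1 j : ℝ) * (yval r j) ^ 2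
          = ∑ j ∈ Finset.Icc 1 n, (height q2 j : ℝ) * (yval r j) ^ 2) ↔ q1 = q2)) := by
  classical
  open XiAux in
  -- the step function `A`
  set A : ℕ → ℝ := fun j => if j = 0 then 0 else (yval r j)^2 with hAdef
  have hA0 : A 0 = 0 := by simp [hAdef]
  have hAj : ∀ j ∈ Finset.Icc 1 n, A j = (yval r j)^2 := by
    intro j hj
    rw [Finset.mem_Icc] at hj
    simp [hAdef, show j ≠ 0 by omega]
  -- partial sums of heights equal Tf (as reals)
  have hC : ∀ (l : List ℕ) (k : ℕ),
      ∑ j ∈ Finset.Icc 1 k, ((height l j : ℝ)) = ((XiAux.Tf l k : ℕ) : ℝ) := by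
    intro l k
    rw [← XiAux.sum_height]
    push_cast
    rfl
  -- Abel rewrite of each side
  have habel : ∀ (l : List ℕ), IsPartition n l →
      ∑ j ∈ Finset.Icc 1 n, (height l j : ℝ) * (yval r j)^2
        = ∑ i ∈ Finset.Icc 1 n, (A i - A (i-1)) * ((n : ℝ) - ((XiAux.Tf l (i-1) : ℕ) : ℝ)) := by
    intro l hl
    have e1 : ∑ j ∈ Finset.Icc 1 n, (height l j : ℝ) * (yval r j)^2
        = ∑ j ∈ Finset.Icc 1 n, (height l j : ℝ) * A j :=
      Finset.sum_congr rfl (fun j hj => by rw [hAj j hj])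
    rw [e1, XiAux.abel (fun j => (height l j : ℝ)) A hA0 n]
    refine Finset.sum_congr rfl (fun i _ => ?_)
    rw [hC l n, hC l (i-1), XiAux.T_top hl]
  have hdiff_nonneg : ∀ i ∈ Finset.Icc 1 n, 0 ≤ A i - A (i-1) := by
    intro i hi
    rw [Finset.mem_Icc] at hi
    rcases Nat.eq_or_lt_of_le hi.1 with h | h
    · rw [← h]
      simp only [hAdef]
      norm_num [XiAux.yval_one]
      positivity
    · have h2 : 2 ≤ i := h
      have := XiAux.sq_mono hr1 hr2 (i-1) (by omega)
      rw [show i - 1 + 1 = i from by omega] at this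
      have hAi : A i = (yval r i)^2 := by simp [hAdef, show i ≠ 0 by omega]
      have hAi1 : A (i-1) = (yval r (i-1))^2 := by simp [hAdef, show i - 1 ≠ 0 by omega]
      rw [hAi, hAi1]
      linarith
  have hTle : ∀ k, ((XiAux.Tf q2 k : ℕ) : ℝ) ≤ ((XiAux.Tf q1 k : ℕ) : ℝ) := by
    intro k
    exact_mod_cast XiAux.T_antitone h1 h2 hdom k
  -- first part: the inequality
  have hmain : ∑ j ∈ Finset.Icc 1 n, (height q1 j : ℝ) * (yval r j) ^ 2
      ≤ ∑ j ∈ Finset.Icc 1 n, (height q2 j : ℝ) * (yval r j) ^ 2 := by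
    rw [habel q1 h1, habel q2 h2]
    refine Finset.sum_le_sum (fun i hi => ?_)
    have := hTle (i-1)
    exact mul_le_mul_of_nonneg_left (by linarith) (hdiff_nonneg i hi)
  refine ⟨hmain, fun h0 h12 => ⟨fun heq => ?_, fun h => by rw [h]⟩⟩
  -- equality case
  have hdiff_pos : ∀ i ∈ Finset.Icc 1 n, 0 < A i - A (i-1) := by
    intro i hi
    rw [Finset.mem_Icc] at hi
    rcases Nat.eq_or_lt_of_le hi.1 with h | h
    · rw [← h]
      simp only [hAdef]
      norm_num [XiAux.yval_one]
      positivity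
    · have := XiAux.sq_strict hr1 hr2 h0 h12 (i-1) (by omega)
      rw [show i - 1 + 1 = i from by omega] at this
      have hAi : A i = (yval r i)^2 := by simp [hAdef, show i ≠ 0 by omega]
      have hAi1 : A (i-1) = (yval r (i-1))^2 := by simp [hAdef, show i - 1 ≠ 0 by omega]
      rw [hAi, hAi1]
      linarith
  rw [habel q1 h1, habel q2 h2] at heq
  have hterm : ∀ i ∈ Finset.Icc 1 n,
      (A i - A (i-1)) * ((n : ℝ) - ((XiAux.Tf q1 (i-1) : ℕ) : ℝ))
        ≤ (A i - A (i-1)) * ((n : ℝ) - ((XiAux.Tf q2 (i-1) : ℕ) : ℝ)) := by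
    intro i hi
    have := hTle (i-1)
    exact mul_le_mul_of_nonneg_left (by linarith) (hdiff_nonneg i hi)
  have hall := (Finset.sum_eq_sum_iff_of_le hterm).mp heq
  -- Tf values agree for all k ≤ n
  have hTeq : ∀ k ≤ n, XiAux.Tf q1 k = XiAux.Tf q2 k := by
    intro k hk
    rcases Nat.eq_or_lt_of_le hk with h | h
    · rw [h, XiAux.T_top h1, XiAux.T_top h2]
    · have hi : k + 1 ∈ Finset.Icc 1 n := by rw [Finset.mem_Icc]; omega
      have := hall (k+1) hi
      have hd := hdiff_pos (k+1) hi
      have hcan : ((n : ℝ) - ((XiAux.Tf q1 k : ℕ) : ℝ))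
          = ((n : ℝ) - ((XiAux.Tf q2 k : ℕ) : ℝ)) := by
        have hk1 : k + 1 - 1 = k := by omega
        rw [hk1] at this
        exact mul_left_cancel₀ (ne_of_gt hd) this
      have : ((XiAux.Tf q1 k : ℕ) : ℝ) = ((XiAux.Tf q2 k : ℕ) : ℝ) := by linarith
      exact_mod_cast this
  -- heights agree for all v ≥ 1
  have hheight : ∀ v, 1 ≤ v → height q1 v = height q2 v := by
    intro v hv
    by_cases hvn : v ≤ n
    · have e1 := XiAux.T_split q1 (v-1)
      have e2 := XiAux.T_split q2 (v-1)
      have hv1 : v - 1 + 1 = v := by omega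
      rw [hv1] at e1 e2
      have a1 := hTeq (v-1) (by omega)
      have a2 := hTeq v hvn
      omega
    · rw [XiAux.height_top h1 (by omega), XiAux.height_top h2 (by omega)]
  exact XiAux.eq_of_height_eq h1 h2 hheight
end
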